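/- Let w be a partial permutation with rank function r_w, essential set E(w), and row/column descent sets Desc_row(w), Desc_col(w). Say that N ∈ Mat_{m,n}(Z≥0) carries an antidiagonal (i.e., corresponds to a monomial NOT standard for the Schubert determinantal ideal) if there exist (p,q) ∈ E(w), t = r_w(p,q)+1, rows r_1 < … < r_t ≤ p, and columns c_1 < … < c_t ≤ q such that N_{r_s, c_{t+1−s}} ≥ 1 for all 1 ≤ s ≤ t. Then: (1) if N carries an antidiagonal and e_i^row(N) ≠ ∅, then e_i^row(N) carries an antidiagonal, for every i; (2) if N carries an antidiagonal, i ∉ Desc_row(w), and f_i^row(N) ≠ ∅, then f_i^row(N) carries an antidiagonal; and symmetrically (3) e_j^col(N) carries an antidiagonal whenever it is not ∅, for every j, and (4) f_j^col(N) carries an antidiagonal whenever j ∉ Desc_col(w) and it is not ∅. -/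

import Mathlib

namespace FilteredRSK

/-! ## Words and crystal operators (via parenthesis matching) -/

/-- Scan the word `w`, treating each letter `i` as a `)` and each letter `i+1` as a `(`,
matching parentheses in the usual way.  Returns the pair consisting of the list of positions
of unmatched `)` (rightmost first) and the stack of positions of unmatched `(`
(most recent first, so the leftmost unmatched `(` is the last entry). -/
def bracketScan (i : ℕ) (w : List ℕ) : List ℕ × List ℕ :=
  (w.zipIdx.map Prod.swap).foldl
    (fun (st : List ℕ × List ℕ) (p : ℕ × ℕ) =>
      if p.2 = i + 1 then (st.1, p.1 :: st.2)
      else if p.2 = i then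
        match st.2 with
        | [] => (p.1 :: st.1, [])
        | _ :: rest => (st.1, rest)
      else st)
    ([], [])

/-- Position of the rightmost unmatched `)` of `bracket_i(w)`, if any. -/
def fPos (i : ℕ) (w : List ℕ) : Option ℕ := (bracketScan i w).1.head?

/-- Position of the leftmost unmatched `(` of `bracket_i(w)`, if any. -/
def ePos (i : ℕ) (w : List ℕ) : Option ℕ := (bracketScan i w).2.getLast?

/-- The crystal lowering operator `f_i`: change the letter `i` at the rightmost unmatched `)`
to `i+1`; output `∅` (i.e. `none`) if there is no unmatched `)`. -/
def fWord (i : ℕ) (w : List ℕ) : Option (List ℕ) := (fPos i w).map fun p => w.set p (i + 1)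

/-- The crystal raising operator `e_i`: change the letter `i+1` at the leftmost unmatched `(`
to `i`; output `∅` (i.e. `none`) if there is no unmatched `(`. -/
def eWord (i : ℕ) (w : List ℕ) : Option (List ℕ) := (ePos i w).map fun p => w.set p i

/-! ## Tableaux -/

/-- A tableau is a list of rows (top to bottom).  Its column reading word reads each column
bottom-to-top, columns left to right. -/
def readingWord (T : List (List ℕ)) : List ℕ :=
  (List.range (T.headD []).length).flatMap fun j => (T.filterMap fun row => row[j]?).reverse

/-- Semistandardness: all rows nonempty, rows weakly increase, row lengths weakly decrease,
and columns strictly increase. -/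
def IsSSYT (T : List (List ℕ)) : Prop :=
  (∀ row ∈ T, row ≠ []) ∧
  (∀ row ∈ T, row.Chain' (· ≤ ·)) ∧
  T.Chain' (fun row row' => row'.length ≤ row.length ∧
    ∀ j < row'.length, row.getD j 0 < row'.getD j 0)

/-- All entries of the tableau `T` lie in the interval `[a, b]`. -/
def entriesIn (T : List (List ℕ)) (a b : ℕ) : Prop := ∀ row ∈ T, ∀ x ∈ row, a ≤ x ∧ x ≤ b

/-- The shape of a tableau: the list of its row lengths. -/
def shape (T : List (List ℕ)) : List ℕ := T.map List.length

/-- A partition: a weakly decreasing list of positive integers. -/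
def IsPartition (lam : List ℕ) : Prop :=
  lam.Chain' (fun x y => y ≤ x) ∧ ∀ x ∈ lam, 0 < x

/-- Row insertion of `x` into a single row: replace the first entry strictly larger than `x`
(and bump it out), or append `x` at the end. -/
def insertRow (row : List ℕ) (x : ℕ) : List ℕ × Option ℕ :=
  match row.findIdx? (fun y => decide (x < y)) with
  | none => (row ++ [x], none)
  | some k => (row.set k x, row[k]?)

/-- Row insertion of a letter into a tableau. -/
def insertTab : List (List ℕ) → ℕ → List (List ℕ)
  | [], x => [[x]]
  | row :: rest, x =>
    match insertRow row x with
    | (row', none) => row' :: rest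
    | (row', some y) => row' :: insertTab rest y

/-- The insertion tableau of a word, obtained by successive row insertion of its letters. -/
def tabOf (w : List ℕ) : List (List ℕ) := w.foldl insertTab []

/-- The highest-weight tableau of shape `lam` with entries from `[a, b]`:
row `i` (0-indexed) is constantly filled with `a + i`. -/
def highestTab (lam : List ℕ) (a : ℕ) : List (List ℕ) :=
  lam.mapIdx fun i len => List.replicate len (a + i)

/-! ## Knuth equivalence -/

/-- Elementary Knuth moves. -/
inductive KnuthStep : List ℕ → List ℕ → Prop
  | yzx (u v : List ℕ) (x y z : ℕ) (h1 : x < y) (h2 : y ≤ z) :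
      KnuthStep (u ++ y :: z :: x :: v) (u ++ y :: x :: z :: v)
  | zxy (u v : List ℕ) (x y z : ℕ) (h1 : x ≤ y) (h2 : y < z) :
      KnuthStep (u ++ z :: x :: y :: v) (u ++ x :: z :: y :: v)

/-- Knuth equivalence: the equivalence relation generated by elementary Knuth moves. -/
def KnuthEquiv : List ℕ → List ℕ → Prop := Relation.EqvGen KnuthStep

/-- The Knuth equivalence class of a word. -/
def KClass (w : List ℕ) : Set (List ℕ) := {v | KnuthEquiv w v}

open Classical in
/-- A representative of a (nonempty) set of words. -/
noncomputable def classRep (C : Set (List ℕ)) : List ℕ :=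
  if h : C.Nonempty then h.some else []

/-- The weight of a Knuth class, defined via a representative. -/
noncomputable def classWt (C : Set (List ℕ)) : Multiset ℕ := ↑(classRep C)

/-- The insertion tableau of a Knuth class (as the reading word of the tableau),
defined via a representative. -/
noncomputable def classTab (C : Set (List ℕ)) : List ℕ := readingWord (tabOf (classRep C))

/-! ## Pre-crystal graphs -/

/-- A pre-crystal graph: a directed graph with edge labels in `L` and
vertex weights in `W`, together with a distinguished set of vertices. -/
structure PCG (V : Type*) (L : Type*) (W : Type*) where
  verts : Set V
  wt : V → W
  E : L → V → V → Prop

namespace PCG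

variable {V V' L L' W W' : Type*}

/-- Underlying undirected adjacency between vertices. -/
def Adj (G : PCG V L W) (u v : V) : Prop :=
  u ∈ G.verts ∧ v ∈ G.verts ∧ ∃ l, G.E l u v ∨ G.E l v u

/-- `u` and `v` lie in the same connected component. -/
def Reach (G : PCG V L W) : V → V → Prop := Relation.ReflTransGen G.Adj

/-- The connected component of `v` in `G`, as a pre-crystal graph. -/
def comp (G : PCG V L W) (v : V) : PCG V L W where
  verts := {u | u ∈ G.verts ∧ G.Reach v u}
  wt := G.wt
  E := G.E

/-- A pre-crystal graph homomorphism (with weights translated along `ω`):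
a vertex map preserving weights and labelled edges. -/
def IsHomVia (G : PCG V L W) (H : PCG V' L W') (ω : W → W') (f : V → V') : Prop :=
  (∀ v ∈ G.verts, f v ∈ H.verts) ∧
  (∀ v ∈ G.verts, H.wt (f v) = ω (G.wt v)) ∧
  (∀ (l : L), ∀ u ∈ G.verts, ∀ v ∈ G.verts, G.E l u v → H.E l (f u) (f v))

/-- A local isomorphism of pre-crystal graphs: a homomorphism whose restriction to each
connected component of `G` is an isomorphism onto a connected component of `H`. -/
def IsLocalIsoVia (G : PCG V L W) (H : PCG V' L W') (ω : W → W') (f : V → V') : Prop :=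
  IsHomVia G H ω f ∧
  (∀ u ∈ G.verts, ∀ v ∈ G.verts, G.Reach u v → f u = f v → u = v) ∧
  (∀ u ∈ G.verts, ∀ v' ∈ H.verts, H.Reach (f u) v' → ∃ v ∈ G.verts, G.Reach u v ∧ f v = v') ∧
  (∀ (l : L), ∀ u ∈ G.verts, ∀ v ∈ G.verts, G.Reach u v → H.E l (f u) (f v) → G.E l u v)

/-- An isomorphism of pre-crystal graphs. -/
def IsIsoVia (G : PCG V L W) (H : PCG V' L W') (ω : W → W') (f : V → V') : Prop :=
  IsHomVia G H ω f ∧ Set.BijOn f G.verts H.verts ∧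
  (∀ (l : L), ∀ u ∈ G.verts, ∀ v ∈ G.verts, H.E l (f u) (f v) → G.E l u v)

/-- Two pre-crystal graphs are isomorphic (with weights identified along `ω`). -/
def IsomorphicVia (G : PCG V L W) (H : PCG V' L W') (ω : W → W') : Prop :=
  ∃ f, IsIsoVia G H ω f

/-- The Cartesian product of two pre-crystal graphs; edge labels form the disjoint union
of the two label sets, and weights are concatenated. -/
def prod (G : PCG V L W) (H : PCG V' L' W') : PCG (V × V') (L ⊕ L') (W × W') where
  verts := {p | p.1 ∈ G.verts ∧ p.2 ∈ H.verts}
  wt := fun p => (G.wt p.1, H.wt p.2)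
  E := fun l p q =>
    match l with
    | Sum.inl a => G.E a p.1 q.1 ∧ p.2 = q.2
    | Sum.inr b => H.E b p.2 q.2 ∧ p.1 = q.1

/-- The Cartesian product of a finite family of pre-crystal graphs sharing a common ambient
label set (with disjoint effective labels, as for crystals of words on disjoint intervals):
an edge labelled `l` acts in a single coordinate and fixes all others. -/
def pi {r : ℕ} (G : Fin r → PCG V L W) : PCG (Fin r → V) L (Fin r → W) where
  verts := {p | ∀ k, p k ∈ (G k).verts}
  wt := fun p k => (G k).wt (p k)
  E := fun l p q => ∃ k, (G k).E l (p k) (q k) ∧ ∀ k', k' ≠ k → p k' = q k'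

end PCG

/-! ## Word, tableau and Knuth crystal graphs -/

/-- The word crystal graph `W_{[a,b]}`: vertices are the words on the alphabet `[a,b]`,
the weight of a word is its multiset of letters (recording the number of occurrences of
each letter), and there is an edge `w →ᵢ v` iff `v = f_i(w)` (for `a ≤ i < b`). -/
def WordGraph (a b : ℕ) : PCG (List ℕ) ℕ (Multiset ℕ) where
  verts := {w | ∀ x ∈ w, a ≤ x ∧ x ≤ b}
  wt := fun w => ↑w
  E := fun i u v => a ≤ i ∧ i < b ∧ fWord i u = some v

/-- The disjoint union `⊕_λ B_{λ,[a,b]}` of all tableau crystal graphs with entries in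
`[a,b]`: the induced subgraph of `W_{[a,b]}` on reading words of semistandard tableaux. -/
def TabWordGraph (a b : ℕ) : PCG (List ℕ) ℕ (Multiset ℕ) where
  verts := {w | ∃ T, IsSSYT T ∧ entriesIn T a b ∧ readingWord T = w}
  wt := fun w => ↑w
  E := fun i u v => a ≤ i ∧ i < b ∧ fWord i u = some v

/-- The tableau crystal graph `B_{λ,[a,b]}`: the induced subgraph of `W_{[a,b]}` on the
reading words of semistandard tableaux of shape `λ` with entries in `[a,b]`. -/
def BGraph (lam : List ℕ) (a b : ℕ) : PCG (List ℕ) ℕ (Multiset ℕ) where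
  verts := {w | ∃ T, IsSSYT T ∧ shape T = lam ∧ entriesIn T a b ∧ readingWord T = w}
  wt := fun w => ↑w
  E := fun i u v => a ≤ i ∧ i < b ∧ fWord i u = some v

/-- The Knuth crystal graph `K_{[a,b]}`: vertices are Knuth equivalence classes of words on
`[a,b]`, weights via representatives, with an edge `C →ᵢ C'` iff some representatives
`w ∈ C`, `w' ∈ C'` satisfy `w' = f_i(w)`. -/
noncomputable def KnuthGraph (a b : ℕ) : PCG (Set (List ℕ)) ℕ (Multiset ℕ) where
  verts := {C | ∃ w, (∀ x ∈ w, a ≤ x ∧ x ≤ b) ∧ C = KClass w}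
  wt := classWt
  E := fun i C C' => ∃ w ∈ C, ∃ w' ∈ C', a ≤ i ∧ i < b ∧ fWord i w = some w'

/-! ## Filtrations -/

/-- `ι` enumerates a filtration `0 = i₀ < i₁ < ⋯ < i_r = m` of `[0, m]`. -/
def IsFiltration (m : ℕ) {r : ℕ} (ι : Fin (r + 1) → ℕ) : Prop :=
  StrictMono ι ∧ ι 0 = 0 ∧ ι (Fin.last r) = m

/-- The subword of `w` consisting of all letters in the interval `[lo + 1, hi]`. -/
def blockFilter (lo hi : ℕ) (w : List ℕ) : List ℕ :=
  w.filter fun x => decide (lo + 1 ≤ x ∧ x ≤ hi)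

/-- The `I`-filtration of a word: the tuple of subwords on the letter intervals
`[i_{k-1}+1, i_k]`. -/
def filterWord {r : ℕ} (ι : Fin (r + 1) → ℕ) (w : List ℕ) : Fin r → List ℕ :=
  fun k => blockFilter (ι k.castSucc) (ι k.succ) w

/-- The canonical splitting of a weight (a multiset of letters) along the intervals of a
filtration. -/
def splitWt {r : ℕ} (ι : Fin (r + 1) → ℕ) (s : Multiset ℕ) : Fin r → Multiset ℕ :=
  fun k => s.filter fun x => ι k.castSucc + 1 ≤ x ∧ x ≤ ι k.succ

/-- The `I`-filtered word crystal graph `W^I_m`: the subgraph of `W_m = W_{[1,m]}` obtained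
by deleting all edges labelled by elements of `I`. -/
def FilteredWordGraph (m : ℕ) (I : Set ℕ) : PCG (List ℕ) ℕ (Multiset ℕ) where
  verts := {w | ∀ x ∈ w, 1 ≤ x ∧ x ≤ m}
  wt := fun w => ↑w
  E := fun i u v => i ∉ I ∧ 1 ≤ i ∧ i < m ∧ fWord i u = some v

/-- The `I`-filtered Knuth crystal graph `K^I_m`: the quotient of `W^I_m` by Knuth
equivalence. -/
noncomputable def FilteredKnuthGraph (m : ℕ) (I : Set ℕ) :
    PCG (Set (List ℕ)) ℕ (Multiset ℕ) where
  verts := {C | ∃ w, (∀ x ∈ w, 1 ≤ x ∧ x ≤ m) ∧ C = KClass w}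
  wt := classWt
  E := fun i C C' => i ∉ I ∧ ∃ w ∈ C, ∃ w' ∈ C', 1 ≤ i ∧ i < m ∧ fWord i w = some w'

/-- The product `W_{[1,i₁]} □ W_{[i₁+1,i₂]} □ ⋯ □ W_{[i_{r-1}+1,m]}`. -/
def WordPiGraph {r : ℕ} (ι : Fin (r + 1) → ℕ) :
    PCG (Fin r → List ℕ) ℕ (Fin r → Multiset ℕ) :=
  PCG.pi fun k => WordGraph (ι k.castSucc + 1) (ι k.succ)

/-- The product `K_{[1,i₁]} □ K_{[i₁+1,i₂]} □ ⋯ □ K_{[i_{r-1}+1,m]}`. -/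
noncomputable def KnuthPiGraph {r : ℕ} (ι : Fin (r + 1) → ℕ) :
    PCG (Fin r → Set (List ℕ)) ℕ (Fin r → Multiset ℕ) :=
  PCG.pi fun k => KnuthGraph (ι k.castSucc + 1) (ι k.succ)

/-- The disjoint union, over all `I`-filtered partition-tuples `λ`, of the filtered tableau
crystal graphs `B_{λ,m} = B_{λ⁽¹⁾,[1,i₁]} □ ⋯ □ B_{λ⁽ʳ⁾,[i_{r-1}+1,m]}`. -/
def TabPiGraph {r : ℕ} (ι : Fin (r + 1) → ℕ) :
    PCG (Fin r → List ℕ) ℕ (Fin r → Multiset ℕ) :=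
  PCG.pi fun k => TabWordGraph (ι k.castSucc + 1) (ι k.succ)

/-- The `I`-filtered tableau crystal graph `B_{λ,m}` of shape-tuple `λ`. -/
def BPiGraph {r : ℕ} (ι : Fin (r + 1) → ℕ) (lam : Fin r → List ℕ) :
    PCG (Fin r → List ℕ) ℕ (Fin r → Multiset ℕ) :=
  PCG.pi fun k => BGraph (lam k) (ι k.castSucc + 1) (ι k.succ)

/-- The map on Knuth classes induced by the `I`-filtration (via a representative). -/
noncomputable def classFilter {r : ℕ} (ι : Fin (r + 1) → ℕ) (C : Set (List ℕ)) :
    Fin r → Set (List ℕ) :=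
  fun k => KClass (filterWord ι (classRep C) k)

/-- An `I`-filtered partition-tuple: each `λ⁽ᵏ⁾` is a partition with at most
`i_k - i_{k-1}` rows. -/
def IsFilteredShape {r : ℕ} (ι : Fin (r + 1) → ℕ) (lam : Fin r → List ℕ) : Prop :=
  ∀ k, IsPartition (lam k) ∧ (lam k).length ≤ ι k.succ - ι k.castSucc

/-- The highest-weight tableau-tuple of shape-tuple `λ`: its `k`-th component is the
highest-weight tableau of shape `λ⁽ᵏ⁾` with entries from `[i_{k-1}+1, i_k]`. -/
def highestTabs {r : ℕ} (ι : Fin (r + 1) → ℕ) (lam : Fin r → List ℕ) :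
    Fin r → List (List ℕ) :=
  fun k => highestTab (lam k) (ι k.castSucc + 1)

/-! ## Matrices, row/column words and bicrystal operators -/

/-- The row word of a nonnegative integer matrix: record `M i j` copies of the (1-based) row
index `i + 1` for each entry, reading columns top-to-bottom, left to right. -/
def rowWord {m n : ℕ} (M : Matrix (Fin m) (Fin n) ℕ) : List ℕ :=
  (List.finRange n).flatMap fun j => (List.finRange m).flatMap fun i =>
    List.replicate (M i j) ((i : ℕ) + 1)

/-- The column word: record `M i j` copies of the (1-based) column index `j + 1` for each
entry, reading rows left-to-right, top to bottom. -/
def colWord {m n : ℕ} (M : Matrix (Fin m) (Fin n) ℕ) : List ℕ :=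
  (List.finRange m).flatMap fun i => (List.finRange n).flatMap fun j =>
    List.replicate (M i j) ((j : ℕ) + 1)

/-- The list of matrix cells producing the successive letters of `rowWord M`. -/
def rowCells {m n : ℕ} (M : Matrix (Fin m) (Fin n) ℕ) : List (Fin m × Fin n) :=
  (List.finRange n).flatMap fun j => (List.finRange m).flatMap fun i =>
    List.replicate (M i j) (i, j)

/-- The list of matrix cells producing the successive letters of `colWord M`. -/
def colCells {m n : ℕ} (M : Matrix (Fin m) (Fin n) ℕ) : List (Fin m × Fin n) :=
  (List.finRange m).flatMap fun i => (List.finRange n).flatMap fun j =>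
    List.replicate (M i j) (i, j)

/-- Subtract `1` at the cell `c` and add `1` at the cell directly below. -/
def shiftDown {m n : ℕ} (M : Matrix (Fin m) (Fin n) ℕ) (c : Fin m × Fin n) :
    Matrix (Fin m) (Fin n) ℕ := fun a b =>
  if a = c.1 ∧ b = c.2 then M a b - 1
  else if (a : ℕ) = (c.1 : ℕ) + 1 ∧ b = c.2 then M a b + 1
  else M a b

/-- Subtract `1` at the cell `c` and add `1` at the cell directly above. -/
def shiftUp {m n : ℕ} (M : Matrix (Fin m) (Fin n) ℕ) (c : Fin m × Fin n) :
    Matrix (Fin m) (Fin n) ℕ := fun a b =>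
  if a = c.1 ∧ b = c.2 then M a b - 1
  else if (a : ℕ) + 1 = (c.1 : ℕ) ∧ b = c.2 then M a b + 1
  else M a b

/-- Subtract `1` at the cell `c` and add `1` at the cell directly to the right. -/
def shiftRight {m n : ℕ} (M : Matrix (Fin m) (Fin n) ℕ) (c : Fin m × Fin n) :
    Matrix (Fin m) (Fin n) ℕ := fun a b =>
  if a = c.1 ∧ b = c.2 then M a b - 1
  else if a = c.1 ∧ (b : ℕ) = (c.2 : ℕ) + 1 then M a b + 1
  else M a b

/-- Subtract `1` at the cell `c` and add `1` at the cell directly to the left. -/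
def shiftLeft {m n : ℕ} (M : Matrix (Fin m) (Fin n) ℕ) (c : Fin m × Fin n) :
    Matrix (Fin m) (Fin n) ℕ := fun a b =>
  if a = c.1 ∧ b = c.2 then M a b - 1
  else if a = c.1 ∧ (b : ℕ) + 1 = (c.2 : ℕ) then M a b + 1
  else M a b

/-- The row bicrystal lowering operator `f_i^row`, transporting `f_i` through `rowWord`. -/
def fRow {m n : ℕ} (i : ℕ) (M : Matrix (Fin m) (Fin n) ℕ) :
    Option (Matrix (Fin m) (Fin n) ℕ) :=
  (fPos i (rowWord M)).bind fun p => ((rowCells M)[p]?).map fun c => shiftDown M c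

/-- The row bicrystal raising operator `e_i^row`, transporting `e_i` through `rowWord`. -/
def eRow {m n : ℕ} (i : ℕ) (M : Matrix (Fin m) (Fin n) ℕ) :
    Option (Matrix (Fin m) (Fin n) ℕ) :=
  (ePos i (rowWord M)).bind fun p => ((rowCells M)[p]?).map fun c => shiftUp M c

/-- The column bicrystal lowering operator `f_j^col`, transporting `f_j` through `colWord`. -/
def fCol {m n : ℕ} (j : ℕ) (M : Matrix (Fin m) (Fin n) ℕ) :
    Option (Matrix (Fin m) (Fin n) ℕ) :=
  (fPos j (colWord M)).bind fun p => ((colCells M)[p]?).map fun c => shiftRight M c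

/-- The column bicrystal raising operator `e_j^col`, transporting `e_j` through `colWord`. -/
def eCol {m n : ℕ} (j : ℕ) (M : Matrix (Fin m) (Fin n) ℕ) :
    Option (Matrix (Fin m) (Fin n) ℕ) :=
  (ePos j (colWord M)).bind fun p => ((colCells M)[p]?).map fun c => shiftLeft M c

/-- The pre-crystal graph `M^row_{m,n}`: vertices are all matrices in `Mat_{m,n}(ℤ≥0)`,
weights are row-sums (the weight of the row word), edges `M →ᵢ f_i^row(M)`. -/
def MRowGraph (m n : ℕ) : PCG (Matrix (Fin m) (Fin n) ℕ) ℕ (Multiset ℕ) where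
  verts := Set.univ
  wt := fun M => ↑(rowWord M)
  E := fun i M M' => 1 ≤ i ∧ i < m ∧ fRow i M = some M'

/-- The pre-crystal graph `M^col_{m,n}`. -/
def MColGraph (m n : ℕ) : PCG (Matrix (Fin m) (Fin n) ℕ) ℕ (Multiset ℕ) where
  verts := Set.univ
  wt := fun M => ↑(colWord M)
  E := fun j M M' => 1 ≤ j ∧ j < n ∧ fCol j M = some M'

/-- The matrix bicrystal graph `M_{m,n}`, with edges labelled `i^row` (`Sum.inl i`) and
`j^col` (`Sum.inr j`), and weight the pair (row-sum tuple, column-sum tuple). -/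
def MatGraph (m n : ℕ) :
    PCG (Matrix (Fin m) (Fin n) ℕ) (ℕ ⊕ ℕ) (Multiset ℕ × Multiset ℕ) where
  verts := Set.univ
  wt := fun M => (↑(rowWord M), ↑(colWord M))
  E := fun l M M' =>
    match l with
    | Sum.inl i => 1 ≤ i ∧ i < m ∧ fRow i M = some M'
    | Sum.inr j => 1 ≤ j ∧ j < n ∧ fCol j M = some M'

/-- The `(I|J)`-filtered matrix bicrystal graph `M^{I|J}_{m,n}`: delete the edges labelled
`i^row` with `i ∈ I` and `j^col` with `j ∈ J`. -/
def FilteredMatGraph (m n : ℕ) (I J : Set ℕ) :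
    PCG (Matrix (Fin m) (Fin n) ℕ) (ℕ ⊕ ℕ) (Multiset ℕ × Multiset ℕ) where
  verts := Set.univ
  wt := fun M => (↑(rowWord M), ↑(colWord M))
  E := fun l M M' =>
    match l with
    | Sum.inl i => i ∉ I ∧ 1 ≤ i ∧ i < m ∧ fRow i M = some M'
    | Sum.inr j => j ∉ J ∧ 1 ≤ j ∧ j < n ∧ fCol j M = some M'

/-- `filterRSK_{I|J}` at the level of reading words: apply the insertion tableau map to each
component of the filtrations of the row and column words, recording reading words. -/
def filterRSKw {m n r s : ℕ} (ι : Fin (r + 1) → ℕ) (κ : Fin (s + 1) → ℕ)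
    (M : Matrix (Fin m) (Fin n) ℕ) : (Fin r → List ℕ) × (Fin s → List ℕ) :=
  (fun k => readingWord (tabOf (filterWord ι (rowWord M) k)),
   fun k => readingWord (tabOf (filterWord κ (colWord M) k)))

/-- `filterRSK_{I|J}` at the level of tableaux. -/
def filterRSKt {m n r s : ℕ} (ι : Fin (r + 1) → ℕ) (κ : Fin (s + 1) → ℕ)
    (M : Matrix (Fin m) (Fin n) ℕ) :
    (Fin r → List (List ℕ)) × (Fin s → List (List ℕ)) :=
  (fun k => tabOf (filterWord ι (rowWord M) k),
   fun k => tabOf (filterWord κ (colWord M) k))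

/-- A matrix is a highest-weight vertex of `M^{I|J}_{m,n}`:
`e_i^row(M) = ∅` for all `i ∉ I` and `e_j^col(M) = ∅` for all `j ∉ J`. -/
def MatHighest {m n : ℕ} (I J : Set ℕ) (M : Matrix (Fin m) (Fin n) ℕ) : Prop :=
  (∀ i, 1 ≤ i → i < m → i ∉ I → eRow i M = none) ∧
  (∀ j, 1 ≤ j → j < n → j ∉ J → eCol j M = none)

/-- A set of matrices is `(I|J)`-bicrystal closed if it is closed under the bicrystal
operators `e_i^row, f_i^row` (`i ∉ I`) and `e_j^col, f_j^col` (`j ∉ J`). -/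
def BicrystalClosed {m n : ℕ} (I J : Set ℕ) (S : Set (Matrix (Fin m) (Fin n) ℕ)) : Prop :=
  ∀ M ∈ S,
    (∀ i, 1 ≤ i → i < m → i ∉ I →
      (∀ N, fRow i M = some N → N ∈ S) ∧ (∀ N, eRow i M = some N → N ∈ S)) ∧
    (∀ j, 1 ≤ j → j < n → j ∉ J →
      (∀ N, fCol j M = some N → N ∈ S) ∧ (∀ N, eCol j M = some N → N ∈ S))

/-- The induced pre-crystal subgraph of `M^{I|J}_{m,n}` on a set `S` of matrices. -/
def inducedMatGraph (m n : ℕ) (I J : Set ℕ) (S : Set (Matrix (Fin m) (Fin n) ℕ)) :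
    PCG (Matrix (Fin m) (Fin n) ℕ) (ℕ ⊕ ℕ) (Multiset ℕ × Multiset ℕ) where
  verts := S
  wt := fun M => (↑(rowWord M), ↑(colWord M))
  E := (FilteredMatGraph m n I J).E

/-- The disjoint union, over the highest-weight matrices `M₀ ∈ S` (hence with multiplicity
`c_{λ|μ}` for each filtered partition-tuple `(λ|μ)`), of copies of `B_{λ,m} □ B_{μ,n}` where
`(λ|μ)` is the shape of `filterRSK_{I|J}(M₀)`. -/
def sumCopiesGraph {m n : ℕ} {r s : ℕ} (ι : Fin (r + 1) → ℕ) (κ : Fin (s + 1) → ℕ)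
    (S : Set (Matrix (Fin m) (Fin n) ℕ)) :
    PCG (Matrix (Fin m) (Fin n) ℕ × ((Fin r → List ℕ) × (Fin s → List ℕ))) (ℕ ⊕ ℕ)
      ((Fin r → Multiset ℕ) × (Fin s → Multiset ℕ)) where
  verts := {Mp | Mp.1 ∈ S ∧ MatHighest (Set.range ι) (Set.range κ) Mp.1 ∧
    ∃ lam mu, IsFilteredShape ι lam ∧ IsFilteredShape κ mu ∧
      filterRSKt ι κ Mp.1 = (highestTabs ι lam, highestTabs κ mu) ∧
      Mp.2 ∈ (PCG.prod (BPiGraph ι lam) (BPiGraph κ mu)).verts}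
  wt := fun Mp => (PCG.prod (TabPiGraph ι) (TabPiGraph κ)).wt Mp.2
  E := fun l Mp Mq =>
    Mp.1 = Mq.1 ∧ (PCG.prod (TabPiGraph ι) (TabPiGraph κ)).E l Mp.2 Mq.2

/-! ## 1-based matrix entries and shape vectors -/

/-- The `(i,j)` entry of `M` in 1-based coordinates, with the convention that entries outside
the matrix are `0`. -/
def ent {m n : ℕ} (M : Matrix (Fin m) (Fin n) ℕ) (i j : ℕ) : ℕ :=
  if h : 1 ≤ i ∧ i ≤ m ∧ 1 ≤ j ∧ j ≤ n then M ⟨i - 1, by omega⟩ ⟨j - 1, by omega⟩ else 0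

/-- The partition `(lam (lo+1), lam (lo+2), …, lam (lo+size))` with trailing zero parts
removed: the shape of the block of a filtered partition-tuple written as an integer vector. -/
def blockShape (lam : ℕ → ℕ) (lo size : ℕ) : List ℕ :=
  ((List.range size).map fun t => lam (lo + t + 1)).filter fun x => decide (0 < x)

/-- The highest-weight tableau-tuple of the filtered partition-tuple written as an integer
vector `lam : ℕ → ℕ` (1-based). -/
def highestFromVec {r : ℕ} (ι : Fin (r + 1) → ℕ) (lam : ℕ → ℕ) : Fin r → List (List ℕ) :=
  fun k => highestTab (blockShape lam (ι k.castSucc) (ι k.succ - ι k.castSucc))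
    (ι k.castSucc + 1)

/-! ## Partial permutations and matrix Schubert combinatorics -/

/-- A partial permutation: at most one `1` in each row and column; encoded as an injective
partial function from rows to columns (`none` encodes `∞`). -/
def IsPartialPerm {m n : ℕ} (w : Fin m → Option (Fin n)) : Prop :=
  ∀ a a' b, w a = some b → w a' = some b → a = a'

/-- The cell `(i, j)` lies in the Rothe diagram `D(w)`: it is not weakly below nor weakly
right of a dot of the partial permutation matrix. -/
def InD {m n : ℕ} (w : Fin m → Option (Fin n)) (i : Fin m) (j : Fin n) : Prop :=
  (∀ b, w i = some b → (j : ℕ) < (b : ℕ)) ∧ (∀ a, a ≤ i → w a ≠ some j)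

/-- The row descent positions of `w` (1-based): rows `i` such that the rightmost box of
`D(w)` in row `i` is strictly right of the rightmost box in row `i + 1`. -/
def DescRow {m n : ℕ} (w : Fin m → Option (Fin n)) : Set ℕ :=
  {i | ∃ (h1 : 1 ≤ i) (h2 : i < m), ∃ j : Fin n,
    InD w ⟨i - 1, by omega⟩ j ∧ ∀ j' : Fin n, InD w ⟨i, h2⟩ j' → (j' : ℕ) < (j : ℕ)}

/-- The column descent positions of `w` (1-based). -/
def DescCol {m n : ℕ} (w : Fin m → Option (Fin n)) : Set ℕ :=
  {j | ∃ (h1 : 1 ≤ j) (h2 : j < n), ∃ i : Fin m,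
    InD w i ⟨j - 1, by omega⟩ ∧ ∀ i' : Fin m, InD w i' ⟨j, h2⟩ → (i' : ℕ) < (i : ℕ)}

/-- The rank function `r_w(i,j)`: the rank of the northwest `i × j` submatrix of the partial
permutation matrix, i.e. the number of dots in that submatrix. -/
noncomputable def rankFn {m n : ℕ} (w : Fin m → Option (Fin n)) (i j : ℕ) : ℕ :=
  Set.ncard {a : Fin m | (a : ℕ) < i ∧ ∃ b : Fin n, w a = some b ∧ (b : ℕ) < j}

/-- The matrix Schubert variety `X_w ⊆ Mat_{m,n}(ℂ)`: matrices whose northwest `i × j`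
submatrices have rank at most `r_w(i,j)`. -/
def XSchubert {m n : ℕ} (w : Fin m → Option (Fin n)) : Set (Matrix (Fin m) (Fin n) ℂ) :=
  {A | ∀ (i : ℕ) (hi : i ≤ m) (j : ℕ) (hj : j ≤ n),
    (A.submatrix (Fin.castLE hi) (Fin.castLE hj)).rank ≤ rankFn w i j}

/-- `g` is block-diagonal with diagonal blocks of sizes `i₁ - i₀, …, i_r - i_{r-1}`. -/
def IsBlockDiag {m : ℕ} {r : ℕ} (ι : Fin (r + 1) → ℕ) (g : Matrix (Fin m) (Fin m) ℂ) :
    Prop :=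
  ∀ a b : Fin m,
    (¬ ∃ k : Fin r, ι k.castSucc ≤ (a : ℕ) ∧ (a : ℕ) < ι k.succ ∧
        ι k.castSucc ≤ (b : ℕ) ∧ (b : ℕ) < ι k.succ) → g a b = 0

/-- `(p, q)` (0-based) is a cell of the essential set `E(w)`. -/
def EssCell {m n : ℕ} (w : Fin m → Option (Fin n)) (p : Fin m) (q : Fin n) : Prop :=
  InD w p q ∧ (∀ hq : (q : ℕ) + 1 < n, ¬ InD w p ⟨(q : ℕ) + 1, hq⟩) ∧
    (∀ hp : (p : ℕ) + 1 < m, ¬ InD w ⟨(p : ℕ) + 1, hp⟩ q)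

/-- `N` carries an antidiagonal of some Fulton generator of the Schubert determinantal ideal
of `w`: there are an essential cell `(p,q)`, `t = r_w(p,q) + 1` rows `r₁ < ⋯ < r_t ≤ p` and
columns `c₁ < ⋯ < c_t ≤ q` with `N_{r_s, c_{t+1-s}} ≥ 1` for all `s`. -/
def CarriesAntidiag {m n : ℕ} (w : Fin m → Option (Fin n))
    (N : Matrix (Fin m) (Fin n) ℕ) : Prop :=
  ∃ (p : Fin m) (q : Fin n), EssCell w p q ∧
    ∃ (rr : Fin (rankFn w ((p : ℕ) + 1) ((q : ℕ) + 1) + 1) → Fin m)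
      (cc : Fin (rankFn w ((p : ℕ) + 1) ((q : ℕ) + 1) + 1) → Fin n),
      StrictMono rr ∧ StrictMono cc ∧ (∀ t, rr t ≤ p) ∧ (∀ t, cc t ≤ q) ∧
      ∀ t, 1 ≤ N (rr t) (cc t.rev)


/-! ### Auxiliary lemmas for Statement 18 -/

def bstep (i : ℕ) : (List ℕ × List ℕ) → (ℕ × ℕ) → (List ℕ × List ℕ) :=
    fun (st : List ℕ × List ℕ) (p : ℕ × ℕ) =>
      if p.2 = i + 1 then (st.1, p.1 :: st.2)
      else if p.2 = i then
        match st.2 with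
        | [] => (p.1 :: st.1, [])
        | _ :: rest => (st.1, rest)
      else st

lemma bracketScan_eq (i : ℕ) (w : List ℕ) :
    bracketScan i w = (w.zipIdx.map Prod.swap).foldl (bstep i) ([], []) := rfl

def BInv (i : ℕ) (w : List ℕ) (k : ℕ) (st : List ℕ × List ℕ) : Prop :=
  st.2.Pairwise (· > ·) ∧
  (∀ p ∈ st.2, p < k ∧ w[p]? = some (i+1) ∧
    ∀ q, p < q → q < k → w[q]? = some i →
      ∃ q', p < q' ∧ q' < q ∧ w[q']? = some (i+1)) ∧
  (∀ p ∈ st.1, p < k ∧ w[p]? = some i ∧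
    ∀ q, q < p → w[q]? = some (i+1) → ∃ q', q < q' ∧ q' < p ∧ w[q']? = some i) ∧
  (∀ q, q < k → w[q]? = some (i+1) →
    q ∈ st.2 ∨ ∃ q', q < q' ∧ q' < k ∧ w[q']? = some i)

lemma binv_step (i : ℕ) (w : List ℕ) (k : ℕ) (x : ℕ) (hx : w[k]? = some x) (st : List ℕ × List ℕ)
    (h : BInv i w k st) : BInv i w (k+1) (bstep i st (k, x)) := by
  obtain ⟨hpw, hop, hcl, hR⟩ := h
  by_cases h1 : x = i + 1
  · rw [h1] at hx ⊢
    have hstep : bstep i st (k, i+1) = (st.1, k :: st.2) := by simp [bstep]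
    rw [hstep]
    refine ⟨?_, ?_, ?_, ?_⟩
    · exact List.pairwise_cons.2 ⟨fun p hp => (hop p hp).1, hpw⟩
    · intro p hp
      rcases List.mem_cons.1 hp with rfl | hp
      · refine ⟨by omega, hx, fun q hq1 hq2 _ => by omega⟩
      · obtain ⟨h1, h2, h3⟩ := hop p hp
        refine ⟨by omega, h2, fun q hq1 hq2 hq3 => ?_⟩
        rcases Nat.lt_succ_iff_lt_or_eq.1 hq2 with hq | rfl
        · exact h3 q hq1 hq hq3
        · rw [hx] at hq3; simp at hq3
    · intro p hp
      obtain ⟨h1, h2, h3⟩ := hcl p hp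
      exact ⟨by omega, h2, h3⟩
    · intro q hq hql
      rcases Nat.lt_succ_iff_lt_or_eq.1 hq with hq | rfl
      · rcases hR q hq hql with hmem | ⟨q', h1, h2, h3⟩
        · exact Or.inl (List.mem_cons_of_mem _ hmem)
        · exact Or.inr ⟨q', h1, by omega, h3⟩
      · exact Or.inl (List.mem_cons_self)
  · by_cases h2 : x = i
    · rw [h2] at hx ⊢
      cases hst : st.2 with
      | nil =>
        have hstep : bstep i st (k, i) = (k :: st.1, []) := by
          simp [bstep, h1, hst]
        rw [hstep]
        refine ⟨List.Pairwise.nil, by simp, ?_, ?_⟩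
        · intro p hp
          rcases List.mem_cons.1 hp with rfl | hp
          · refine ⟨by omega, hx, fun q hq1 hq2 => ?_⟩
            rcases hR q hq1 hq2 with hmem | ⟨q', ha, hb, hc⟩
            · rw [hst] at hmem; simp at hmem
            · exact ⟨q', ha, hb, hc⟩
          · obtain ⟨ha, hb, hc⟩ := hcl p hp
            exact ⟨by omega, hb, hc⟩
        · intro q hq hql
          rcases Nat.lt_succ_iff_lt_or_eq.1 hq with hq | rfl
          · rcases hR q hq hql with hmem | ⟨q', ha, hb, hc⟩
            · rw [hst] at hmem; simp at hmem
            · exact Or.inr ⟨q', ha, by omega, hc⟩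
          · rw [hx] at hql; simp at hql
      | cons q₀ rest =>
        have hstep : bstep i st (k, i) = (st.1, rest) := by
          simp [bstep, h1, hst]
        rw [hstep]
        rw [hst] at hpw hop hR
        refine ⟨(List.pairwise_cons.1 hpw).2, ?_, ?_, ?_⟩
        · intro p hp
          obtain ⟨ha, hb, hc⟩ := hop p (List.mem_cons_of_mem _ hp)
          refine ⟨by omega, hb, fun q hq1 hq2 hq3 => ?_⟩
          rcases Nat.lt_succ_iff_lt_or_eq.1 hq2 with hq | rfl
          · exact hc q hq1 hq hq3
          · have hq0 : q₀ > p := (List.pairwise_cons.1 hpw).1 p hp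
            have := (hop q₀ (List.mem_cons_self)).1
            exact ⟨q₀, hq0, this, (hop q₀ (List.mem_cons_self)).2.1⟩
        · intro p hp
          obtain ⟨ha, hb, hc⟩ := hcl p hp
          exact ⟨by omega, hb, hc⟩
        · intro q hq hql
          rcases Nat.lt_succ_iff_lt_or_eq.1 hq with hq | rfl
          · rcases hR q hq hql with hmem | ⟨q', ha, hb, hc⟩
            · rcases List.mem_cons.1 hmem with rfl | hmem
              · exact Or.inr ⟨k, (hop q (List.mem_cons_self)).1, by omega, hx⟩
              · exact Or.inl hmem
            · exact Or.inr ⟨q', ha, by omega, hc⟩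
          · rw [hx] at hql; simp at hql
    · have hstep : bstep i st (k, x) = st := by simp [bstep, h1, h2]
      rw [hstep]
      refine ⟨hpw, ?_, ?_, ?_⟩
      · intro p hp
        obtain ⟨ha, hb, hc⟩ := hop p hp
        refine ⟨by omega, hb, fun q hq1 hq2 hq3 => ?_⟩
        rcases Nat.lt_succ_iff_lt_or_eq.1 hq2 with hq | rfl
        · exact hc q hq1 hq hq3
        · rw [hx] at hq3; exact absurd (Option.some.inj hq3) h2
      · intro p hp
        obtain ⟨ha, hb, hc⟩ := hcl p hp
        exact ⟨by omega, hb, hc⟩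
      · intro q hq hql
        rcases Nat.lt_succ_iff_lt_or_eq.1 hq with hq | rfl
        · rcases hR q hq hql with hmem | ⟨q', ha, hb, hc⟩
          · exact Or.inl hmem
          · exact Or.inr ⟨q', ha, by omega, hc⟩
        · rw [hx] at hql; exact absurd (Option.some.inj hql) h1


lemma binv_scan (i : ℕ) (w : List ℕ) : BInv i w w.length (bracketScan i w) := by
  have key : ∀ n, n ≤ w.length → BInv i w n (((w.take n).zipIdx.map Prod.swap).foldl (bstep i) ([], [])) := by
    intro n hn
    induction n with
    | zero => exact ⟨List.Pairwise.nil, by simp, by simp, by simp⟩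
    | succ n ih =>
      have hn' : n < w.length := by omega
      have ht : (w.take (n+1)) = w.take n ++ [w[n]] := by
        rw [List.take_succ]; simp [List.getElem?_eq_getElem hn']
      have hlen : (w.take n).length = n := by simp [List.length_take]; omega
      rw [ht, List.zipIdx_append, List.map_append, hlen, List.foldl_append]
      have : ([w[n]].zipIdx (0 + n)).map Prod.swap = [(n, w[n])] := by simp
      rw [this, List.foldl_cons, List.foldl_nil]
      exact binv_step i w n w[n] (List.getElem?_eq_getElem hn') _ (ih (by omega))
  have := key w.length le_rfl
  rwa [List.take_length, ← bracketScan_eq] at this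

lemma ePos_spec {i : ℕ} {w : List ℕ} {p : ℕ} (h : ePos i w = some p) :
    w[p]? = some (i+1) ∧
      ∀ q, p < q → w[q]? = some i → ∃ q', p < q' ∧ q' < q ∧ w[q']? = some (i+1) := by
  have hmem : p ∈ (bracketScan i w).2 := List.mem_of_getLast? h
  obtain ⟨_, hop, _, _⟩ := binv_scan i w
  obtain ⟨h1, h2, h3⟩ := hop p hmem
  refine ⟨h2, fun q hq hql => ?_⟩
  have hqlen : q < w.length := by
    by_contra hc
    rw [List.getElem?_eq_none (by omega)] at hql; exact absurd hql (by simp)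
  exact h3 q hq hqlen hql

lemma fPos_spec {i : ℕ} {w : List ℕ} {p : ℕ} (h : fPos i w = some p) :
    w[p]? = some i ∧
      ∀ q, q < p → w[q]? = some (i+1) → ∃ q', q < q' ∧ q' < p ∧ w[q']? = some i := by
  have hmem : p ∈ (bracketScan i w).1 := List.mem_of_mem_head? h
  obtain ⟨_, _, hcl, _⟩ := binv_scan i w
  obtain ⟨h1, h2, h3⟩ := hcl p hmem
  exact ⟨h2, h3⟩

lemma two_le_count_of_two_pos {α} [BEq α] [LawfulBEq α] {l : List α} {p q : ℕ} {x : α}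
    (hpq : p < q) (hp : l[p]? = some x) (hq : l[q]? = some x) : 2 ≤ l.count x := by
  have h1 : x ∈ l.take q := List.mem_iff_getElem?.2 ⟨p, by
    rw [List.getElem?_take]; simp [hpq, hp]⟩
  have h2 : x ∈ l.drop q := List.mem_iff_getElem?.2 ⟨0, by
    rw [List.getElem?_drop]; simpa using hq⟩
  have c1 : 0 < (l.take q).count x := List.count_pos_iff.2 h1
  have c2 : 0 < (l.drop q).count x := List.count_pos_iff.2 h2
  have : (l.take q).count x + (l.drop q).count x = l.count x := by
    rw [← List.count_append, List.take_append_drop]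
  omega

lemma rowWord_eq_map {m n : ℕ} (M : Matrix (Fin m) (Fin n) ℕ) :
    rowWord M = (rowCells M).map (fun c => (c.1 : ℕ) + 1) := by
  simp [rowWord, rowCells, List.map_flatMap]

lemma colWord_eq_map {m n : ℕ} (M : Matrix (Fin m) (Fin n) ℕ) :
    colWord M = (colCells M).map (fun c => (c.2 : ℕ) + 1) := by
  simp [colWord, colCells, List.map_flatMap]

lemma mem_rowCells {m n : ℕ} {M : Matrix (Fin m) (Fin n) ℕ} {c : Fin m × Fin n} :
    c ∈ rowCells M ↔ 0 < M c.1 c.2 := by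
  simp only [rowCells, List.mem_flatMap, List.mem_finRange, List.mem_replicate, true_and]
  constructor
  · rintro ⟨j, i, hne, rfl⟩; exact Nat.pos_of_ne_zero hne
  · intro h; exact ⟨c.2, c.1, fun h0 => by simp [h0] at h, rfl⟩

lemma mem_colCells {m n : ℕ} {M : Matrix (Fin m) (Fin n) ℕ} {c : Fin m × Fin n} :
    c ∈ colCells M ↔ 0 < M c.1 c.2 := by
  simp only [colCells, List.mem_flatMap, List.mem_finRange, List.mem_replicate, true_and]
  constructor
  · rintro ⟨i, j, hne, rfl⟩; exact Nat.pos_of_ne_zero hne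
  · intro h; exact ⟨c.1, c.2, fun h0 => by simp [h0] at h, rfl⟩

def rCellLE {m n : ℕ} (c d : Fin m × Fin n) : Prop :=
  (c.2 : ℕ) < d.2 ∨ ((c.2 : ℕ) = (d.2 : ℕ) ∧ (c.1 : ℕ) ≤ (d.1 : ℕ))

def cCellLE {m n : ℕ} (c d : Fin m × Fin n) : Prop :=
  (c.1 : ℕ) < d.1 ∨ ((c.1 : ℕ) = (d.1 : ℕ) ∧ (c.2 : ℕ) ≤ (d.2 : ℕ))

lemma rowCells_pairwise {m n : ℕ} (M : Matrix (Fin m) (Fin n) ℕ) :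
    (rowCells M).Pairwise rCellLE := by
  rw [rowCells, List.pairwise_flatMap]
  constructor
  · intro j _
    rw [List.pairwise_flatMap]
    constructor
    · intro i _
      exact List.pairwise_replicate.2 (Or.inr (Or.inr ⟨rfl, le_refl _⟩))
    · refine (List.pairwise_lt_finRange m).imp ?_
      intro i1 i2 h x hx y hy
      obtain ⟨-, rfl⟩ := List.mem_replicate.1 hx
      obtain ⟨-, rfl⟩ := List.mem_replicate.1 hy
      exact Or.inr ⟨rfl, le_of_lt h⟩
  · refine (List.pairwise_lt_finRange n).imp ?_
    intro j1 j2 h x hx y hy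
    simp only [List.mem_flatMap, List.mem_replicate] at hx hy
    obtain ⟨i1, -, -, rfl⟩ := hx
    obtain ⟨i2, -, -, rfl⟩ := hy
    exact Or.inl h

lemma colCells_pairwise {m n : ℕ} (M : Matrix (Fin m) (Fin n) ℕ) :
    (colCells M).Pairwise cCellLE := by
  rw [colCells, List.pairwise_flatMap]
  constructor
  · intro i _
    rw [List.pairwise_flatMap]
    constructor
    · intro j _
      exact List.pairwise_replicate.2 (Or.inr (Or.inr ⟨rfl, le_refl _⟩))
    · refine (List.pairwise_lt_finRange n).imp ?_
      intro j1 j2 h x hx y hy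
      obtain ⟨-, rfl⟩ := List.mem_replicate.1 hx
      obtain ⟨-, rfl⟩ := List.mem_replicate.1 hy
      exact Or.inr ⟨rfl, le_of_lt h⟩
  · refine (List.pairwise_lt_finRange m).imp ?_
    intro i1 i2 h x hx y hy
    simp only [List.mem_flatMap, List.mem_replicate] at hx hy
    obtain ⟨j1, -, -, rfl⟩ := hx
    obtain ⟨j2, -, -, rfl⟩ := hy
    exact Or.inl h

lemma le_of_pairwise_getElem? {α} {R : α → α → Prop} {l : List α} (hl : l.Pairwise R)
    {p q : ℕ} {c d : α} (hpq : p < q) (hc : l[p]? = some c) (hd : l[q]? = some d) :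
    R c d := by
  obtain ⟨hq, rfl⟩ := List.getElem?_eq_some_iff.1 hd
  obtain ⟨hp, rfl⟩ := List.getElem?_eq_some_iff.1 hc
  exact (List.pairwise_iff_getElem.1 hl) p q hp hq hpq

lemma count_rowCells {m n : ℕ} (M : Matrix (Fin m) (Fin n) ℕ) (c : Fin m × Fin n) :
    (rowCells M).count c = M c.1 c.2 := by
  classical
  rw [rowCells, List.count_flatMap]
  rw [← Fin.sum_univ_def]
  have h1 : ∀ j : Fin n,
      (List.count c ∘ fun j => (List.finRange m).flatMap fun i =>
        List.replicate (M i j) (i, j)) j = if j = c.2 then M c.1 j else 0 := by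
    intro j
    simp only [Function.comp_apply, List.count_flatMap, ← Fin.sum_univ_def]
    have h2 : ∀ i : Fin m,
        List.count c (List.replicate (M i j) (i, j))
          = if (i, j) = c then M i j else 0 := by
      intro i
      simp only [List.count_replicate, beq_iff_eq]
    rw [Finset.sum_congr rfl (fun i _ => h2 i)]
    rcases eq_or_ne j c.2 with rfl | hj
    · rw [Finset.sum_eq_single c.1]
      · simp
      · intro b _ hb; simp [Prod.ext_iff, hb]
      · simp
    · rw [Finset.sum_eq_zero, if_neg hj]
      intro i _
      rw [if_neg]
      intro hic
      exact hj (by rw [← hic])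
  rw [Finset.sum_congr rfl (fun j _ => h1 j)]
  simp

lemma count_colCells {m n : ℕ} (M : Matrix (Fin m) (Fin n) ℕ) (c : Fin m × Fin n) :
    (colCells M).count c = M c.1 c.2 := by
  classical
  rw [colCells, List.count_flatMap]
  rw [← Fin.sum_univ_def]
  have h1 : ∀ i : Fin m,
      (List.count c ∘ fun i => (List.finRange n).flatMap fun j =>
        List.replicate (M i j) (i, j)) i = if i = c.1 then M i c.2 else 0 := by
    intro i
    simp only [Function.comp_apply, List.count_flatMap, ← Fin.sum_univ_def]
    have h2 : ∀ j : Fin n,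
        List.count c (List.replicate (M i j) (i, j))
          = if (i, j) = c then M i j else 0 := by
      intro j
      simp only [List.count_replicate, beq_iff_eq]
    rw [Finset.sum_congr rfl (fun j _ => h2 j)]
    rcases eq_or_ne i c.1 with rfl | hi
    · rw [Finset.sum_eq_single c.2]
      · simp
      · intro b _ hb; simp [Prod.ext_iff, hb]
      · simp
    · rw [Finset.sum_eq_zero, if_neg hi]
      intro j _
      rw [if_neg]
      intro hic
      exact hi (by rw [← hic])
  rw [Finset.sum_congr rfl (fun i _ => h1 i)]
  simp

lemma eRow_some {m n : ℕ} {i : ℕ} {N N' : Matrix (Fin m) (Fin n) ℕ}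
    (h : eRow i N = some N') :
    ∃ (p : ℕ) (c : Fin m × Fin n), ePos i (rowWord N) = some p ∧
      (rowCells N)[p]? = some c ∧ N' = shiftUp N c := by
  obtain ⟨p, hp, h2⟩ := Option.bind_eq_some_iff.1 h
  obtain ⟨c, hc, h3⟩ := Option.map_eq_some_iff.1 h2
  exact ⟨p, c, hp, hc, h3.symm⟩

lemma fRow_some {m n : ℕ} {i : ℕ} {N N' : Matrix (Fin m) (Fin n) ℕ}
    (h : fRow i N = some N') :
    ∃ (p : ℕ) (c : Fin m × Fin n), fPos i (rowWord N) = some p ∧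
      (rowCells N)[p]? = some c ∧ N' = shiftDown N c := by
  obtain ⟨p, hp, h2⟩ := Option.bind_eq_some_iff.1 h
  obtain ⟨c, hc, h3⟩ := Option.map_eq_some_iff.1 h2
  exact ⟨p, c, hp, hc, h3.symm⟩

lemma eCol_some {m n : ℕ} {j : ℕ} {N N' : Matrix (Fin m) (Fin n) ℕ}
    (h : eCol j N = some N') :
    ∃ (p : ℕ) (c : Fin m × Fin n), ePos j (colWord N) = some p ∧
      (colCells N)[p]? = some c ∧ N' = shiftLeft N c := by
  obtain ⟨p, hp, h2⟩ := Option.bind_eq_some_iff.1 h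
  obtain ⟨c, hc, h3⟩ := Option.map_eq_some_iff.1 h2
  exact ⟨p, c, hp, hc, h3.symm⟩

lemma fCol_some {m n : ℕ} {j : ℕ} {N N' : Matrix (Fin m) (Fin n) ℕ}
    (h : fCol j N = some N') :
    ∃ (p : ℕ) (c : Fin m × Fin n), fPos j (colWord N) = some p ∧
      (colCells N)[p]? = some c ∧ N' = shiftRight N c := by
  obtain ⟨p, hp, h2⟩ := Option.bind_eq_some_iff.1 h
  obtain ⟨c, hc, h3⟩ := Option.map_eq_some_iff.1 h2
  exact ⟨p, c, hp, hc, h3.symm⟩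

lemma rowWord_getElem? {m n : ℕ} (N : Matrix (Fin m) (Fin n) ℕ) {p : ℕ}
    {c : Fin m × Fin n} (hc : (rowCells N)[p]? = some c) :
    (rowWord N)[p]? = some ((c.1 : ℕ) + 1) := by
  rw [rowWord_eq_map, List.getElem?_map, hc, Option.map_some]

lemma colWord_getElem? {m n : ℕ} (N : Matrix (Fin m) (Fin n) ℕ) {p : ℕ}
    {c : Fin m × Fin n} (hc : (colCells N)[p]? = some c) :
    (colWord N)[p]? = some ((c.2 : ℕ) + 1) := by
  rw [colWord_eq_map, List.getElem?_map, hc, Option.map_some]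

/-- Values of `shiftUp` away from the decremented cell do not decrease. -/
lemma shiftUp_ge {m n : ℕ} (M : Matrix (Fin m) (Fin n) ℕ) (c : Fin m × Fin n)
    {a : Fin m} {b : Fin n} (h : ¬(a = c.1 ∧ b = c.2)) :
    M a b ≤ shiftUp M c a b := by
  unfold shiftUp; split
  · exact absurd ‹_› h
  · split <;> omega

lemma shiftDown_ge {m n : ℕ} (M : Matrix (Fin m) (Fin n) ℕ) (c : Fin m × Fin n)
    {a : Fin m} {b : Fin n} (h : ¬(a = c.1 ∧ b = c.2)) :
    M a b ≤ shiftDown M c a b := by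
  unfold shiftDown; split
  · exact absurd ‹_› h
  · split <;> omega

lemma shiftLeft_ge {m n : ℕ} (M : Matrix (Fin m) (Fin n) ℕ) (c : Fin m × Fin n)
    {a : Fin m} {b : Fin n} (h : ¬(a = c.1 ∧ b = c.2)) :
    M a b ≤ shiftLeft M c a b := by
  unfold shiftLeft; split
  · exact absurd ‹_› h
  · split <;> omega

lemma shiftRight_ge {m n : ℕ} (M : Matrix (Fin m) (Fin n) ℕ) (c : Fin m × Fin n)
    {a : Fin m} {b : Fin n} (h : ¬(a = c.1 ∧ b = c.2)) :
    M a b ≤ shiftRight M c a b := by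
  unfold shiftRight; split
  · exact absurd ‹_› h
  · split <;> omega

lemma shiftUp_self {m n : ℕ} (M : Matrix (Fin m) (Fin n) ℕ) (c : Fin m × Fin n) :
    shiftUp M c c.1 c.2 = M c.1 c.2 - 1 := by
  unfold shiftUp; simp

lemma shiftDown_self {m n : ℕ} (M : Matrix (Fin m) (Fin n) ℕ) (c : Fin m × Fin n) :
    shiftDown M c c.1 c.2 = M c.1 c.2 - 1 := by
  unfold shiftDown; simp

lemma shiftLeft_self {m n : ℕ} (M : Matrix (Fin m) (Fin n) ℕ) (c : Fin m × Fin n) :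
    shiftLeft M c c.1 c.2 = M c.1 c.2 - 1 := by
  unfold shiftLeft; simp

lemma shiftRight_self {m n : ℕ} (M : Matrix (Fin m) (Fin n) ℕ) (c : Fin m × Fin n) :
    shiftRight M c c.1 c.2 = M c.1 c.2 - 1 := by
  unfold shiftRight; simp

lemma shiftUp_target {m n : ℕ} (M : Matrix (Fin m) (Fin n) ℕ) (c : Fin m × Fin n)
    {a : Fin m} (ha : (a : ℕ) + 1 = (c.1 : ℕ)) :
    shiftUp M c a c.2 = M a c.2 + 1 := by
  unfold shiftUp
  rw [if_neg, if_pos ⟨ha, rfl⟩]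
  rintro ⟨rfl, -⟩; omega

lemma shiftDown_target {m n : ℕ} (M : Matrix (Fin m) (Fin n) ℕ) (c : Fin m × Fin n)
    {a : Fin m} (ha : (a : ℕ) = (c.1 : ℕ) + 1) :
    shiftDown M c a c.2 = M a c.2 + 1 := by
  unfold shiftDown
  rw [if_neg, if_pos ⟨ha, rfl⟩]
  rintro ⟨rfl, -⟩; omega

lemma shiftLeft_target {m n : ℕ} (M : Matrix (Fin m) (Fin n) ℕ) (c : Fin m × Fin n)
    {b : Fin n} (hb : (b : ℕ) + 1 = (c.2 : ℕ)) :
    shiftLeft M c c.1 b = M c.1 b + 1 := by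
  unfold shiftLeft
  rw [if_neg, if_pos ⟨rfl, hb⟩]
  rintro ⟨-, rfl⟩; omega

lemma shiftRight_target {m n : ℕ} (M : Matrix (Fin m) (Fin n) ℕ) (c : Fin m × Fin n)
    {b : Fin n} (hb : (b : ℕ) = (c.2 : ℕ) + 1) :
    shiftRight M c c.1 b = M c.1 b + 1 := by
  unfold shiftRight
  rw [if_neg, if_pos ⟨rfl, hb⟩]
  rintro ⟨-, rfl⟩; omega

lemma strictMono_update {k : ℕ} {α : Type*} [LinearOrder α] {f : Fin (k+1) → α}
    (hf : StrictMono f) (s : Fin (k+1)) (v : α)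
    (hlo : ∀ t : Fin (k+1), (t : ℕ) + 1 = (s : ℕ) → f t < v)
    (hhi : ∀ t : Fin (k+1), (t : ℕ) = (s : ℕ) + 1 → v < f t) :
    StrictMono (Function.update f s v) := by
  have hlo' : ∀ t, t < s → f t < v := by
    intro t ht
    have h1 : (t : ℕ) < (s : ℕ) := Fin.lt_def.1 ht
    have h2 := hlo ⟨(s : ℕ) - 1, Nat.lt_of_le_of_lt (Nat.sub_le _ _) s.isLt⟩
      (by simp; omega)
    exact lt_of_le_of_lt (hf.monotone (Fin.le_def.2 (by simp; omega))) h2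
  have hhi' : ∀ t, s < t → v < f t := by
    intro t ht
    have h1 : (s : ℕ) < (t : ℕ) := Fin.lt_def.1 ht
    have htk := t.isLt
    have h2 := hhi ⟨(s : ℕ) + 1, by omega⟩ (by simp)
    exact lt_of_lt_of_le h2 (hf.monotone (Fin.le_def.2 (by simp; omega)))
  intro a b hab
  rcases eq_or_ne a s with rfl | ha
  · rw [Function.update_self, Function.update_of_ne (ne_of_gt hab)]
    exact hhi' b hab
  · rw [Function.update_of_ne ha]
    rcases eq_or_ne b s with rfl | hb
    · rw [Function.update_self]; exact hlo' a hab
    · rw [Function.update_of_ne hb]; exact hf hab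

lemma val_rev {k : ℕ} (s : Fin (k+1)) : (s.rev : ℕ) = k - (s : ℕ) := by
  rw [Fin.val_rev]; omega


/-- The key bracket-repair lemma for `e_i^row`. -/
lemma eRow_bracket {m n i : ℕ} {N : Matrix (Fin m) (Fin n) ℕ} {p : ℕ}
    {c d : Fin m × Fin n}
    (hp : ePos i (rowWord N) = some p) (hc : (rowCells N)[p]? = some c)
    (hd : 0 < N d.1 d.2) (hrow : (d.1 : ℕ) + 1 = i) (hcol : (c.2 : ℕ) < (d.2 : ℕ)) :
    2 ≤ N c.1 c.2 ∨ ∃ b : Fin n, 0 < N c.1 b ∧ (c.2 : ℕ) < (b : ℕ) ∧ (b : ℕ) < (d.2 : ℕ) := by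
  have hspec := ePos_spec hp
  have hcw : (rowWord N)[p]? = some ((c.1 : ℕ) + 1) := rowWord_getElem? N hc
  have hcrow : (c.1 : ℕ) = i := by
    have := Option.some.inj (hspec.1.symm.trans hcw); omega
  obtain ⟨q, hq⟩ := List.mem_iff_getElem?.1 (mem_rowCells.2 hd)
  have hwq : (rowWord N)[q]? = some i := by
    rw [rowWord_getElem? N hq, hrow]
  have hpq : p < q := by
    rcases lt_trichotomy p q with h | h | h
    · exact h
    · rw [h, hq] at hc
      have := Option.some.inj hc; rw [this] at hcol; omega
    · have := le_of_pairwise_getElem? (rowCells_pairwise N) h hq hc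
      rcases this with h' | ⟨h', -⟩ <;> omega
  obtain ⟨q', hq'1, hq'2, hq'3⟩ := hspec.2 q hpq hwq
  have hq'len : q' < (rowCells N).length := by
    obtain ⟨hlen, -⟩ := List.getElem?_eq_some_iff.1 hq
    omega
  obtain ⟨e, he⟩ : ∃ e, (rowCells N)[q']? = some e :=
    ⟨(rowCells N)[q']'hq'len, List.getElem?_eq_getElem hq'len⟩
  have herow : (e.1 : ℕ) = i := by
    have := rowWord_getElem? N he
    rw [hq'3] at this
    have := Option.some.inj this; omega
  have he1 : 0 < N e.1 e.2 := mem_rowCells.1 (List.mem_iff_getElem?.2 ⟨q', he⟩)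
  have h1 := le_of_pairwise_getElem? (rowCells_pairwise N) hq'1 hc he
  have h2 := le_of_pairwise_getElem? (rowCells_pairwise N) hq'2 he hq
  have he2d : (e.2 : ℕ) < (d.2 : ℕ) := by
    rcases h2 with h' | ⟨-, h'⟩
    · exact h'
    · omega
  rcases h1 with h' | ⟨h', -⟩
  · right
    exact ⟨e.2, by rwa [show e.1 = c.1 from Fin.ext (by omega)] at he1, h', he2d⟩
  · -- e.2 = c.2, rows equal, so e = c : a duplicate cell
    left
    have hec : e = c := by
      apply Prod.ext <;> apply Fin.ext <;> omega
    have hcount := two_le_count_of_two_pos hq'1 hc (hec ▸ he)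
    rwa [count_rowCells] at hcount

/-- The key bracket-repair lemma for `f_i^row`. -/
lemma fRow_bracket {m n i : ℕ} {N : Matrix (Fin m) (Fin n) ℕ} {p : ℕ}
    {c d : Fin m × Fin n}
    (hp : fPos i (rowWord N) = some p) (hc : (rowCells N)[p]? = some c)
    (hd : 0 < N d.1 d.2) (hrow : (d.1 : ℕ) = i) (hcol : (d.2 : ℕ) < (c.2 : ℕ)) :
    2 ≤ N c.1 c.2 ∨ ∃ b : Fin n, 0 < N c.1 b ∧ (d.2 : ℕ) < (b : ℕ) ∧ (b : ℕ) < (c.2 : ℕ) := by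
  have hspec := fPos_spec hp
  have hcw : (rowWord N)[p]? = some ((c.1 : ℕ) + 1) := rowWord_getElem? N hc
  have hcrow : (c.1 : ℕ) + 1 = i := by
    have := Option.some.inj (hspec.1.symm.trans hcw); omega
  obtain ⟨q, hq⟩ := List.mem_iff_getElem?.1 (mem_rowCells.2 hd)
  have hwq : (rowWord N)[q]? = some (i + 1) := by
    rw [rowWord_getElem? N hq, hrow]
  have hpq : q < p := by
    rcases lt_trichotomy q p with h | h | h
    · exact h
    · rw [← h, hq] at hc
      have := Option.some.inj hc; rw [this] at hcol; omega
    · have := le_of_pairwise_getElem? (rowCells_pairwise N) h hc hq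
      rcases this with h' | ⟨h', -⟩ <;> omega
  obtain ⟨q', hq'1, hq'2, hq'3⟩ := hspec.2 q hpq hwq
  have hq'len : q' < (rowCells N).length := by
    obtain ⟨hlen, -⟩ := List.getElem?_eq_some_iff.1 hc
    omega
  obtain ⟨e, he⟩ : ∃ e, (rowCells N)[q']? = some e :=
    ⟨(rowCells N)[q']'hq'len, List.getElem?_eq_getElem hq'len⟩
  have herow : (e.1 : ℕ) + 1 = i := by
    have := rowWord_getElem? N he
    rw [hq'3] at this
    have := Option.some.inj this; omega
  have he1 : 0 < N e.1 e.2 := mem_rowCells.1 (List.mem_iff_getElem?.2 ⟨q', he⟩)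
  have h1 := le_of_pairwise_getElem? (rowCells_pairwise N) hq'1 hq he
  have h2 := le_of_pairwise_getElem? (rowCells_pairwise N) hq'2 he hc
  have hd2e : (d.2 : ℕ) < (e.2 : ℕ) := by
    rcases h1 with h' | ⟨-, h'⟩
    · exact h'
    · omega
  rcases h2 with h' | ⟨h', -⟩
  · right
    exact ⟨e.2, by rwa [show e.1 = c.1 from Fin.ext (by omega)] at he1, hd2e, h'⟩
  · left
    have hec : e = c := by
      apply Prod.ext <;> apply Fin.ext <;> omega
    have hcount := two_le_count_of_two_pos hq'2 (hec ▸ he) hc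
    rwa [count_rowCells] at hcount

/-- The key bracket-repair lemma for `e_j^col`. -/
lemma eCol_bracket {m n j : ℕ} {N : Matrix (Fin m) (Fin n) ℕ} {p : ℕ}
    {c d : Fin m × Fin n}
    (hp : ePos j (colWord N) = some p) (hc : (colCells N)[p]? = some c)
    (hd : 0 < N d.1 d.2) (hcol : (d.2 : ℕ) + 1 = j) (hrow : (c.1 : ℕ) < (d.1 : ℕ)) :
    2 ≤ N c.1 c.2 ∨ ∃ a : Fin m, 0 < N a c.2 ∧ (c.1 : ℕ) < (a : ℕ) ∧ (a : ℕ) < (d.1 : ℕ) := by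
  have hspec := ePos_spec hp
  have hcw : (colWord N)[p]? = some ((c.2 : ℕ) + 1) := colWord_getElem? N hc
  have hccol : (c.2 : ℕ) = j := by
    have := Option.some.inj (hspec.1.symm.trans hcw); omega
  obtain ⟨q, hq⟩ := List.mem_iff_getElem?.1 (mem_colCells.2 hd)
  have hwq : (colWord N)[q]? = some j := by
    rw [colWord_getElem? N hq, hcol]
  have hpq : p < q := by
    rcases lt_trichotomy p q with h | h | h
    · exact h
    · rw [h, hq] at hc
      have := Option.some.inj hc; rw [this] at hrow; omega
    · have := le_of_pairwise_getElem? (colCells_pairwise N) h hq hc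
      rcases this with h' | ⟨h', -⟩ <;> omega
  obtain ⟨q', hq'1, hq'2, hq'3⟩ := hspec.2 q hpq hwq
  have hq'len : q' < (colCells N).length := by
    obtain ⟨hlen, -⟩ := List.getElem?_eq_some_iff.1 hq
    omega
  obtain ⟨e, he⟩ : ∃ e, (colCells N)[q']? = some e :=
    ⟨(colCells N)[q']'hq'len, List.getElem?_eq_getElem hq'len⟩
  have hecol : (e.2 : ℕ) = j := by
    have := colWord_getElem? N he
    rw [hq'3] at this
    have := Option.some.inj this; omega
  have he1 : 0 < N e.1 e.2 := mem_colCells.1 (List.mem_iff_getElem?.2 ⟨q', he⟩)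
  have h1 := le_of_pairwise_getElem? (colCells_pairwise N) hq'1 hc he
  have h2 := le_of_pairwise_getElem? (colCells_pairwise N) hq'2 he hq
  have he1d : (e.1 : ℕ) < (d.1 : ℕ) := by
    rcases h2 with h' | ⟨-, h'⟩
    · exact h'
    · omega
  rcases h1 with h' | ⟨h', -⟩
  · right
    exact ⟨e.1, by rwa [show e.2 = c.2 from Fin.ext (by omega)] at he1, h', he1d⟩
  · left
    have hec : e = c := by
      apply Prod.ext <;> apply Fin.ext <;> omega
    have hcount := two_le_count_of_two_pos hq'1 hc (hec ▸ he)
    rwa [count_colCells] at hcount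

/-- The key bracket-repair lemma for `f_j^col`. -/
lemma fCol_bracket {m n j : ℕ} {N : Matrix (Fin m) (Fin n) ℕ} {p : ℕ}
    {c d : Fin m × Fin n}
    (hp : fPos j (colWord N) = some p) (hc : (colCells N)[p]? = some c)
    (hd : 0 < N d.1 d.2) (hcol : (d.2 : ℕ) = j) (hrow : (d.1 : ℕ) < (c.1 : ℕ)) :
    2 ≤ N c.1 c.2 ∨ ∃ a : Fin m, 0 < N a c.2 ∧ (d.1 : ℕ) < (a : ℕ) ∧ (a : ℕ) < (c.1 : ℕ) := by
  have hspec := fPos_spec hp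
  have hcw : (colWord N)[p]? = some ((c.2 : ℕ) + 1) := colWord_getElem? N hc
  have hccol : (c.2 : ℕ) + 1 = j := by
    have := Option.some.inj (hspec.1.symm.trans hcw); omega
  obtain ⟨q, hq⟩ := List.mem_iff_getElem?.1 (mem_colCells.2 hd)
  have hwq : (colWord N)[q]? = some (j + 1) := by
    rw [colWord_getElem? N hq, hcol]
  have hpq : q < p := by
    rcases lt_trichotomy q p with h | h | h
    · exact h
    · rw [← h, hq] at hc
      have := Option.some.inj hc; rw [this] at hrow; omega
    · have := le_of_pairwise_getElem? (colCells_pairwise N) h hc hq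
      rcases this with h' | ⟨h', -⟩ <;> omega
  obtain ⟨q', hq'1, hq'2, hq'3⟩ := hspec.2 q hpq hwq
  have hq'len : q' < (colCells N).length := by
    obtain ⟨hlen, -⟩ := List.getElem?_eq_some_iff.1 hc
    omega
  obtain ⟨e, he⟩ : ∃ e, (colCells N)[q']? = some e :=
    ⟨(colCells N)[q']'hq'len, List.getElem?_eq_getElem hq'len⟩
  have hecol : (e.2 : ℕ) + 1 = j := by
    have := colWord_getElem? N he
    rw [hq'3] at this
    have := Option.some.inj this; omega
  have he1 : 0 < N e.1 e.2 := mem_colCells.1 (List.mem_iff_getElem?.2 ⟨q', he⟩)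
  have h1 := le_of_pairwise_getElem? (colCells_pairwise N) hq'1 hq he
  have h2 := le_of_pairwise_getElem? (colCells_pairwise N) hq'2 he hc
  have hd1e : (d.1 : ℕ) < (e.1 : ℕ) := by
    rcases h1 with h' | ⟨-, h'⟩
    · exact h'
    · omega
  rcases h2 with h' | ⟨h', -⟩
  · right
    exact ⟨e.1, by rwa [show e.2 = c.2 from Fin.ext (by omega)] at he1, hd1e, h'⟩
  · left
    have hec : e = c := by
      apply Prod.ext <;> apply Fin.ext <;> omega
    have hcount := two_le_count_of_two_pos hq'2 (hec ▸ he) hc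
    rwa [count_colCells] at hcount

lemma descRow_of_essCell {m n : ℕ} {w : Fin m → Option (Fin n)} {P : Fin m} {Q : Fin n}
    (hess : EssCell w P Q) {i : ℕ} (hi1 : 1 ≤ i) (hi2 : i < m) (hP : (P : ℕ) + 1 = i) :
    i ∈ DescRow w := by
  refine ⟨hi1, hi2, Q, ?_, ?_⟩
  · have hPe : (⟨i - 1, by omega⟩ : Fin m) = P := Fin.ext (by simp; omega)
    rw [hPe]; exact hess.1
  · intro j' hj'
    by_contra hlt
    push_neg at hlt
    have hnInD := hess.2.2 (show (P : ℕ) + 1 < m by omega)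
    apply hnInD
    constructor
    · intro b hb
      have hb' : w ⟨i, hi2⟩ = some b := by
        convert hb using 2; exact Fin.ext (by simp; omega)
      have := hj'.1 b hb'
      omega
    · intro a ha hwa
      rcases lt_or_eq_of_le (Fin.le_def.1 ha) with h' | h'
      · exact hess.1.2 a (Fin.le_def.2 (by simp at h' ⊢; omega)) hwa
      · have hai : a = ⟨i, hi2⟩ := Fin.ext (by simp at h' ⊢; omega)
        rw [hai] at hwa
        have := hj'.1 Q hwa
        omega

lemma descCol_of_essCell {m n : ℕ} {w : Fin m → Option (Fin n)} {P : Fin m} {Q : Fin n}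
    (hess : EssCell w P Q) {j : ℕ} (hj1 : 1 ≤ j) (hj2 : j < n) (hQ : (Q : ℕ) + 1 = j) :
    j ∈ DescCol w := by
  refine ⟨hj1, hj2, P, ?_, ?_⟩
  · have hQe : (⟨j - 1, by omega⟩ : Fin n) = Q := Fin.ext (by simp; omega)
    rw [hQe]; exact hess.1
  · intro i' hi'
    by_contra hlt
    push_neg at hlt
    have hnInD := hess.2.1 (show (Q : ℕ) + 1 < n by omega)
    apply hnInD
    constructor
    · intro b hb
      have := hess.1.1 b hb
      rcases Nat.lt_or_ge ((Q : ℕ) + 1) (b : ℕ) with h' | h'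
      · simpa using h'
      · have hbq : b = ⟨j, hj2⟩ := Fin.ext (by show (b:ℕ) = j; omega)
        exfalso
        exact hi'.2 P (Fin.le_def.2 (by omega)) (by rw [hb, hbq])
    · intro a ha hwa
      have haQ : w a ≠ some ⟨j, hj2⟩ := hi'.2 a (le_trans ha (Fin.le_def.2 (by omega)))
      apply haQ
      rw [hwa]
      congr 1
      exact Fin.ext (by simp; omega)

/-- Generic antidiagonal-repair lemma for `e_i^row`, with the size `K` of the antidiagonal
abstracted. -/
lemma carries_eRow_aux {m n K : ℕ} {N : Matrix (Fin m) (Fin n) ℕ} {i p : ℕ}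
    {c : Fin m × Fin n} {P : Fin m} {Q : Fin n}
    (hi1 : 1 ≤ i)
    (hp : ePos i (rowWord N) = some p) (hc : (rowCells N)[p]? = some c)
    (rr : Fin (K+1) → Fin m) (cc : Fin (K+1) → Fin n)
    (hrr : StrictMono rr) (hcc : StrictMono cc)
    (hrP : ∀ t, rr t ≤ P) (hcQ : ∀ t, cc t ≤ Q)
    (hval : ∀ t, 1 ≤ N (rr t) (cc t.rev)) :
    ∃ (rr' : Fin (K+1) → Fin m) (cc' : Fin (K+1) → Fin n),
      StrictMono rr' ∧ StrictMono cc' ∧ (∀ t, rr' t ≤ P) ∧ (∀ t, cc' t ≤ Q) ∧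
      ∀ t, 1 ≤ shiftUp N c (rr' t) (cc' t.rev) := by
  have hcrow : (c.1 : ℕ) = i := by
    have h1 := rowWord_getElem? N hc
    have h2 := (ePos_spec hp).1
    have := Option.some.inj (h2.symm.trans h1); omega
  have hcpos : 0 < N c.1 c.2 := mem_rowCells.1 (List.mem_iff_getElem?.2 ⟨p, hc⟩)
  by_cases hhit : ∃ s, rr s = c.1 ∧ cc s.rev = c.2
  swap
  · refine ⟨rr, cc, hrr, hcc, hrP, hcQ, fun t => ?_⟩
    exact le_trans (hval t) (shiftUp_ge N c (fun hcon => hhit ⟨t, hcon⟩))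
  obtain ⟨s, hs1, hs2⟩ := hhit
  by_cases h2 : 2 ≤ N c.1 c.2
  · refine ⟨rr, cc, hrr, hcc, hrP, hcQ, fun t => ?_⟩
    by_cases ht : rr t = c.1 ∧ cc t.rev = c.2
    · rw [ht.1, ht.2, shiftUp_self]; omega
    · exact le_trans (hval t) (shiftUp_ge N c ht)
  by_cases hb : ∃ s1 : Fin (K+1), (s1 : ℕ) + 1 = (s : ℕ) ∧ (rr s1 : ℕ) = i - 1
  · -- repair the column using the bracket lemma
    obtain ⟨s1, hs1pred, hprev⟩ := hb
    have hs1lt : s1 < s := Fin.lt_def.2 (by omega)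
    have hd : 0 < N (rr s1) (cc s1.rev) := hval s1
    have hdrow : (rr s1 : ℕ) + 1 = i := by omega
    have hcol : (c.2 : ℕ) < (cc s1.rev : ℕ) := by
      have hrev : s.rev < s1.rev := Fin.rev_lt_rev.2 hs1lt
      have h' := Fin.lt_def.1 (hcc hrev)
      rw [hs2] at h'
      exact h'
    rcases eRow_bracket (d := (rr s1, cc s1.rev)) hp hc hd hdrow hcol with
      h2' | ⟨b, hb1, hb2, hb3⟩
    · omega
    · have hb3' : (b : ℕ) < (cc s1.rev : ℕ) := hb3
      have hc2Q := Fin.le_def.1 (hcQ s1.rev)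
      refine ⟨rr, Function.update cc s.rev b, hrr, ?_, hrP, ?_, ?_⟩
      · refine strictMono_update hcc s.rev b ?_ ?_
        · intro t htv
          have hlt : t < s.rev := Fin.lt_def.2 (by omega)
          have h' := Fin.lt_def.1 (hcc hlt)
          rw [hs2] at h'
          exact Fin.lt_def.2 (by omega)
        · intro t htv
          have hrevval : (s.rev : ℕ) = K - (s : ℕ) := val_rev s
          have hs1v : (s1.rev : ℕ) = K - (s1 : ℕ) := val_rev s1
          have hxe : t = s1.rev := Fin.ext (by omega)
          rw [hxe]
          exact Fin.lt_def.2 (by omega)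
      · intro t
        rcases eq_or_ne t s.rev with rfl | ht
        · rw [Function.update_self]
          exact Fin.le_def.2 (by omega)
        · rw [Function.update_of_ne ht]; exact hcQ t
      · intro t
        rcases eq_or_ne t s with rfl | ht
        · rw [Function.update_self, hs1]
          refine le_trans hb1 (shiftUp_ge N c ?_)
          rintro ⟨-, rfl⟩
          omega
        · rw [Function.update_of_ne (fun hco => ht (Fin.rev_injective hco))]
          refine le_trans (hval t) (shiftUp_ge N c ?_)
          rintro ⟨hco, -⟩
          exact ht (hrr.injective (hco.trans hs1.symm))
  · -- repair the row using the cell above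
    have hvP := Fin.le_def.1 (hrP s)
    refine ⟨Function.update rr s ⟨i - 1, by omega⟩, cc, ?_, hcc, ?_, hcQ, ?_⟩
    · refine strictMono_update hrr s _ ?_ ?_
      · intro t htv
        have hne : (rr t : ℕ) ≠ i - 1 := fun hx => hb ⟨t, htv, hx⟩
        have := Fin.lt_def.1 (hrr (show t < s from Fin.lt_def.2 (by omega)))
        exact Fin.lt_def.2 (by simp; omega)
      · intro t htv
        have := Fin.lt_def.1 (hrr (show s < t from Fin.lt_def.2 (by omega)))
        exact Fin.lt_def.2 (by simp; omega)
    · intro t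
      rcases eq_or_ne t s with rfl | ht
      · rw [Function.update_self]
        exact Fin.le_def.2 (by simp; omega)
      · rw [Function.update_of_ne ht]; exact hrP t
    · intro t
      rcases eq_or_ne t s with rfl | ht
      · rw [Function.update_self, hs2]
        rw [shiftUp_target N c (by simp; omega)]
        omega
      · rw [Function.update_of_ne ht]
        refine le_trans (hval t) (shiftUp_ge N c ?_)
        rintro ⟨hco, -⟩
        exact ht (hrr.injective (hco.trans hs1.symm))

lemma carries_eRow {m n : ℕ} {w : Fin m → Option (Fin n)} {N N' : Matrix (Fin m) (Fin n) ℕ}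
    (hN : CarriesAntidiag w N) {i : ℕ} (hi1 : 1 ≤ i)
    (h : eRow i N = some N') : CarriesAntidiag w N' := by
  obtain ⟨p, c, hp, hc, rfl⟩ := eRow_some h
  obtain ⟨P, Q, hess, rr, cc, hrr, hcc, hrP, hcQ, hval⟩ := hN
  obtain ⟨rr', cc', h1, h2, h3, h4, h5⟩ :=
    carries_eRow_aux hi1 hp hc rr cc hrr hcc hrP hcQ hval
  exact ⟨P, Q, hess, rr', cc', h1, h2, h3, h4, h5⟩

/-- Generic antidiagonal-repair lemma for `f_i^row`. -/
lemma carries_fRow_aux {m n K : ℕ} {N : Matrix (Fin m) (Fin n) ℕ} {i p : ℕ}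
    {c : Fin m × Fin n} {P : Fin m} {Q : Fin n}
    (hi1 : 1 ≤ i) (hi2 : i < m)
    (hp : fPos i (rowWord N) = some p) (hc : (rowCells N)[p]? = some c)
    (hPne : (P : ℕ) + 1 ≠ i)
    (rr : Fin (K+1) → Fin m) (cc : Fin (K+1) → Fin n)
    (hrr : StrictMono rr) (hcc : StrictMono cc)
    (hrP : ∀ t, rr t ≤ P) (hcQ : ∀ t, cc t ≤ Q)
    (hval : ∀ t, 1 ≤ N (rr t) (cc t.rev)) :
    ∃ (rr' : Fin (K+1) → Fin m) (cc' : Fin (K+1) → Fin n),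
      StrictMono rr' ∧ StrictMono cc' ∧ (∀ t, rr' t ≤ P) ∧ (∀ t, cc' t ≤ Q) ∧
      ∀ t, 1 ≤ shiftDown N c (rr' t) (cc' t.rev) := by
  have hcrow : (c.1 : ℕ) + 1 = i := by
    have h1 := rowWord_getElem? N hc
    have h2 := (fPos_spec hp).1
    have := Option.some.inj (h2.symm.trans h1); omega
  have hcpos : 0 < N c.1 c.2 := mem_rowCells.1 (List.mem_iff_getElem?.2 ⟨p, hc⟩)
  by_cases hhit : ∃ s, rr s = c.1 ∧ cc s.rev = c.2
  swap
  · refine ⟨rr, cc, hrr, hcc, hrP, hcQ, fun t => ?_⟩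
    exact le_trans (hval t) (shiftDown_ge N c (fun hcon => hhit ⟨t, hcon⟩))
  obtain ⟨s, hs1, hs2⟩ := hhit
  by_cases h2 : 2 ≤ N c.1 c.2
  · refine ⟨rr, cc, hrr, hcc, hrP, hcQ, fun t => ?_⟩
    by_cases ht : rr t = c.1 ∧ cc t.rev = c.2
    · rw [ht.1, ht.2, shiftDown_self]; omega
    · exact le_trans (hval t) (shiftDown_ge N c ht)
  by_cases hb : ∃ s2 : Fin (K+1), (s2 : ℕ) = (s : ℕ) + 1 ∧ (rr s2 : ℕ) = i
  · -- repair the column using the bracket lemma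
    obtain ⟨s2, hs2succ, hnext⟩ := hb
    have hs2gt : s < s2 := Fin.lt_def.2 (by omega)
    have hd : 0 < N (rr s2) (cc s2.rev) := hval s2
    have hdrow : (rr s2 : ℕ) = i := hnext
    have hcol : (cc s2.rev : ℕ) < (c.2 : ℕ) := by
      have hrev : s2.rev < s.rev := Fin.rev_lt_rev.2 hs2gt
      have h' := Fin.lt_def.1 (hcc hrev)
      rw [hs2] at h'
      exact h'
    rcases fRow_bracket (d := (rr s2, cc s2.rev)) hp hc hd hdrow hcol with
      h2' | ⟨b, hb1, hb2, hb3⟩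
    · omega
    · have hb2' : (cc s2.rev : ℕ) < (b : ℕ) := hb2
      have hc2Q := Fin.le_def.1 (hcQ s.rev)
      rw [hs2] at hc2Q
      refine ⟨rr, Function.update cc s.rev b, hrr, ?_, hrP, ?_, ?_⟩
      · refine strictMono_update hcc s.rev b ?_ ?_
        · intro t htv
          have hrevval : (s.rev : ℕ) = K - (s : ℕ) := val_rev s
          have hs2v : (s2.rev : ℕ) = K - (s2 : ℕ) := val_rev s2
          have hs2k := s2.isLt
          have hxe : t = s2.rev := Fin.ext (by omega)
          rw [hxe]
          exact Fin.lt_def.2 (by omega)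
        · intro t htv
          have hlt : s.rev < t := Fin.lt_def.2 (by omega)
          have h' := Fin.lt_def.1 (hcc hlt)
          rw [hs2] at h'
          exact Fin.lt_def.2 (by omega)
      · intro t
        rcases eq_or_ne t s.rev with rfl | ht
        · rw [Function.update_self]
          exact Fin.le_def.2 (by omega)
        · rw [Function.update_of_ne ht]; exact hcQ t
      · intro t
        rcases eq_or_ne t s with rfl | ht
        · rw [Function.update_self, hs1]
          refine le_trans hb1 (shiftDown_ge N c ?_)
          rintro ⟨-, rfl⟩
          omega
        · rw [Function.update_of_ne (fun hco => ht (Fin.rev_injective hco))]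
          refine le_trans (hval t) (shiftDown_ge N c ?_)
          rintro ⟨hco, -⟩
          exact ht (hrr.injective (hco.trans hs1.symm))
  · -- repair the row using the cell below
    have hvP := Fin.le_def.1 (hrP s)
    refine ⟨Function.update rr s ⟨i, hi2⟩, cc, ?_, hcc, ?_, hcQ, ?_⟩
    · refine strictMono_update hrr s _ ?_ ?_
      · intro t htv
        have := Fin.lt_def.1 (hrr (show t < s from Fin.lt_def.2 (by omega)))
        exact Fin.lt_def.2 (by simp; omega)
      · intro t htv
        have hne : (rr t : ℕ) ≠ i := fun hx => hb ⟨t, htv, hx⟩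
        have := Fin.lt_def.1 (hrr (show s < t from Fin.lt_def.2 (by omega)))
        exact Fin.lt_def.2 (by simp; omega)
    · intro t
      rcases eq_or_ne t s with rfl | ht
      · rw [Function.update_self]
        exact Fin.le_def.2 (by simp; omega)
      · rw [Function.update_of_ne ht]; exact hrP t
    · intro t
      rcases eq_or_ne t s with rfl | ht
      · rw [Function.update_self, hs2]
        rw [shiftDown_target N c (by simp; omega)]
        omega
      · rw [Function.update_of_ne ht]
        refine le_trans (hval t) (shiftDown_ge N c ?_)
        rintro ⟨hco, -⟩
        exact ht (hrr.injective (hco.trans hs1.symm))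

lemma carries_fRow {m n : ℕ} {w : Fin m → Option (Fin n)} {N N' : Matrix (Fin m) (Fin n) ℕ}
    (hN : CarriesAntidiag w N) {i : ℕ} (hi1 : 1 ≤ i) (hi2 : i < m) (hdesc : i ∉ DescRow w)
    (h : fRow i N = some N') : CarriesAntidiag w N' := by
  obtain ⟨p, c, hp, hc, rfl⟩ := fRow_some h
  obtain ⟨P, Q, hess, rr, cc, hrr, hcc, hrP, hcQ, hval⟩ := hN
  have hPne : (P : ℕ) + 1 ≠ i := fun hPi =>
    hdesc (descRow_of_essCell hess hi1 hi2 hPi)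
  obtain ⟨rr', cc', h1, h2, h3, h4, h5⟩ :=
    carries_fRow_aux hi1 hi2 hp hc hPne rr cc hrr hcc hrP hcQ hval
  exact ⟨P, Q, hess, rr', cc', h1, h2, h3, h4, h5⟩

/-- Generic antidiagonal-repair lemma for `e_j^col`. -/
lemma carries_eCol_aux {m n K : ℕ} {N : Matrix (Fin m) (Fin n) ℕ} {j p : ℕ}
    {c : Fin m × Fin n} {P : Fin m} {Q : Fin n}
    (hj1 : 1 ≤ j)
    (hp : ePos j (colWord N) = some p) (hc : (colCells N)[p]? = some c)
    (rr : Fin (K+1) → Fin m) (cc : Fin (K+1) → Fin n)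
    (hrr : StrictMono rr) (hcc : StrictMono cc)
    (hrP : ∀ t, rr t ≤ P) (hcQ : ∀ t, cc t ≤ Q)
    (hval : ∀ t, 1 ≤ N (rr t) (cc t.rev)) :
    ∃ (rr' : Fin (K+1) → Fin m) (cc' : Fin (K+1) → Fin n),
      StrictMono rr' ∧ StrictMono cc' ∧ (∀ t, rr' t ≤ P) ∧ (∀ t, cc' t ≤ Q) ∧
      ∀ t, 1 ≤ shiftLeft N c (rr' t) (cc' t.rev) := by
  have hccol : (c.2 : ℕ) = j := by
    have h1 := colWord_getElem? N hc
    have h2 := (ePos_spec hp).1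
    have := Option.some.inj (h2.symm.trans h1); omega
  have hcpos : 0 < N c.1 c.2 := mem_colCells.1 (List.mem_iff_getElem?.2 ⟨p, hc⟩)
  by_cases hhit : ∃ s, rr s = c.1 ∧ cc s.rev = c.2
  swap
  · refine ⟨rr, cc, hrr, hcc, hrP, hcQ, fun t => ?_⟩
    exact le_trans (hval t) (shiftLeft_ge N c (fun hcon => hhit ⟨t, hcon⟩))
  obtain ⟨s, hs1, hs2⟩ := hhit
  by_cases h2 : 2 ≤ N c.1 c.2
  · refine ⟨rr, cc, hrr, hcc, hrP, hcQ, fun t => ?_⟩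
    by_cases ht : rr t = c.1 ∧ cc t.rev = c.2
    · rw [ht.1, ht.2, shiftLeft_self]; omega
    · exact le_trans (hval t) (shiftLeft_ge N c ht)
  by_cases hb : ∃ s2 : Fin (K+1), (s2 : ℕ) = (s : ℕ) + 1 ∧ (cc s2.rev : ℕ) = j - 1
  · -- repair the row using the bracket lemma
    obtain ⟨s2, hs2succ, hnext⟩ := hb
    have hs2gt : s < s2 := Fin.lt_def.2 (by omega)
    have hd : 0 < N (rr s2) (cc s2.rev) := hval s2
    have hdcol : (cc s2.rev : ℕ) + 1 = j := by omega
    have hrow : (c.1 : ℕ) < (rr s2 : ℕ) := by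
      have h' := Fin.lt_def.1 (hrr hs2gt)
      omega
    rcases eCol_bracket (d := (rr s2, cc s2.rev)) hp hc hd hdcol hrow with
      h2' | ⟨a, ha1, ha2, ha3⟩
    · omega
    · have ha3' : (a : ℕ) < (rr s2 : ℕ) := ha3
      have haP := Fin.le_def.1 (hrP s2)
      refine ⟨Function.update rr s a, cc, ?_, hcc, ?_, hcQ, ?_⟩
      · refine strictMono_update hrr s a ?_ ?_
        · intro t htv
          have h' := Fin.lt_def.1 (hrr (show t < s from Fin.lt_def.2 (by omega)))
          exact Fin.lt_def.2 (by omega)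
        · intro t htv
          have hxe : t = s2 := Fin.ext (by omega)
          rw [hxe]
          exact Fin.lt_def.2 (by omega)
      · intro t
        rcases eq_or_ne t s with rfl | ht
        · rw [Function.update_self]
          exact Fin.le_def.2 (by omega)
        · rw [Function.update_of_ne ht]; exact hrP t
      · intro t
        rcases eq_or_ne t s with rfl | ht
        · rw [Function.update_self, hs2]
          refine le_trans ha1 (shiftLeft_ge N c ?_)
          rintro ⟨hco, -⟩
          rw [hco] at ha2
          omega
        · rw [Function.update_of_ne ht]
          refine le_trans (hval t) (shiftLeft_ge N c ?_)
          rintro ⟨-, hco⟩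
          exact ht (Fin.rev_injective (hcc.injective (hco.trans hs2.symm)))
  · -- repair the column using the cell to the left
    have hvQ := Fin.le_def.1 (hcQ s.rev)
    refine ⟨rr, Function.update cc s.rev ⟨j - 1, by omega⟩, hrr, ?_, hrP, ?_, ?_⟩
    · refine strictMono_update hcc s.rev _ ?_ ?_
      · intro t htv
        have hrevval : (s.rev : ℕ) = K - (s : ℕ) := val_rev s
        have htrev : (t.rev : ℕ) = K - (t : ℕ) := val_rev t
        have htk := t.isLt
        have hne : (cc t : ℕ) ≠ j - 1 := by
          intro hx
          refine hb ⟨t.rev, by omega, ?_⟩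
          rw [Fin.rev_rev]
          exact hx
        have h' := Fin.lt_def.1 (hcc (show t < s.rev from Fin.lt_def.2 (by omega)))
        rw [hs2] at h'
        exact Fin.lt_def.2 (by simp; omega)
      · intro t htv
        have h' := Fin.lt_def.1 (hcc (show s.rev < t from Fin.lt_def.2 (by omega)))
        rw [hs2] at h'
        exact Fin.lt_def.2 (by simp; omega)
    · intro t
      rcases eq_or_ne t s.rev with rfl | ht
      · rw [Function.update_self]
        exact Fin.le_def.2 (by simp; omega)
      · rw [Function.update_of_ne ht]; exact hcQ t
    · intro t
      rcases eq_or_ne t s with rfl | ht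
      · rw [Function.update_self, hs1]
        rw [shiftLeft_target N c (by simp; omega)]
        omega
      · rw [Function.update_of_ne (fun hco => ht (Fin.rev_injective hco))]
        refine le_trans (hval t) (shiftLeft_ge N c ?_)
        rintro ⟨-, hco⟩
        exact ht (Fin.rev_injective (hcc.injective (hco.trans hs2.symm)))

lemma carries_eCol {m n : ℕ} {w : Fin m → Option (Fin n)} {N N' : Matrix (Fin m) (Fin n) ℕ}
    (hN : CarriesAntidiag w N) {j : ℕ} (hj1 : 1 ≤ j)
    (h : eCol j N = some N') : CarriesAntidiag w N' := by
  obtain ⟨p, c, hp, hc, rfl⟩ := eCol_some h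
  obtain ⟨P, Q, hess, rr, cc, hrr, hcc, hrP, hcQ, hval⟩ := hN
  obtain ⟨rr', cc', h1, h2, h3, h4, h5⟩ :=
    carries_eCol_aux hj1 hp hc rr cc hrr hcc hrP hcQ hval
  exact ⟨P, Q, hess, rr', cc', h1, h2, h3, h4, h5⟩

/-- Generic antidiagonal-repair lemma for `f_j^col`. -/
lemma carries_fCol_aux {m n K : ℕ} {N : Matrix (Fin m) (Fin n) ℕ} {j p : ℕ}
    {c : Fin m × Fin n} {P : Fin m} {Q : Fin n}
    (hj1 : 1 ≤ j) (hj2 : j < n)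
    (hp : fPos j (colWord N) = some p) (hc : (colCells N)[p]? = some c)
    (hQne : (Q : ℕ) + 1 ≠ j)
    (rr : Fin (K+1) → Fin m) (cc : Fin (K+1) → Fin n)
    (hrr : StrictMono rr) (hcc : StrictMono cc)
    (hrP : ∀ t, rr t ≤ P) (hcQ : ∀ t, cc t ≤ Q)
    (hval : ∀ t, 1 ≤ N (rr t) (cc t.rev)) :
    ∃ (rr' : Fin (K+1) → Fin m) (cc' : Fin (K+1) → Fin n),
      StrictMono rr' ∧ StrictMono cc' ∧ (∀ t, rr' t ≤ P) ∧ (∀ t, cc' t ≤ Q) ∧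
      ∀ t, 1 ≤ shiftRight N c (rr' t) (cc' t.rev) := by
  have hccol : (c.2 : ℕ) + 1 = j := by
    have h1 := colWord_getElem? N hc
    have h2 := (fPos_spec hp).1
    have := Option.some.inj (h2.symm.trans h1); omega
  have hcpos : 0 < N c.1 c.2 := mem_colCells.1 (List.mem_iff_getElem?.2 ⟨p, hc⟩)
  by_cases hhit : ∃ s, rr s = c.1 ∧ cc s.rev = c.2
  swap
  · refine ⟨rr, cc, hrr, hcc, hrP, hcQ, fun t => ?_⟩
    exact le_trans (hval t) (shiftRight_ge N c (fun hcon => hhit ⟨t, hcon⟩))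
  obtain ⟨s, hs1, hs2⟩ := hhit
  by_cases h2 : 2 ≤ N c.1 c.2
  · refine ⟨rr, cc, hrr, hcc, hrP, hcQ, fun t => ?_⟩
    by_cases ht : rr t = c.1 ∧ cc t.rev = c.2
    · rw [ht.1, ht.2, shiftRight_self]; omega
    · exact le_trans (hval t) (shiftRight_ge N c ht)
  by_cases hb : ∃ s1 : Fin (K+1), (s1 : ℕ) + 1 = (s : ℕ) ∧ (cc s1.rev : ℕ) = j
  · -- repair the row using the bracket lemma
    obtain ⟨s1, hs1pred, hprev⟩ := hb
    have hs1lt : s1 < s := Fin.lt_def.2 (by omega)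
    have hd : 0 < N (rr s1) (cc s1.rev) := hval s1
    have hdcol : (cc s1.rev : ℕ) = j := hprev
    have hrow : (rr s1 : ℕ) < (c.1 : ℕ) := by
      have h' := Fin.lt_def.1 (hrr hs1lt)
      omega
    rcases fCol_bracket (d := (rr s1, cc s1.rev)) hp hc hd hdcol hrow with
      h2' | ⟨a, ha1, ha2, ha3⟩
    · omega
    · have ha2' : (rr s1 : ℕ) < (a : ℕ) := ha2
      have hcP := Fin.le_def.1 (hrP s)
      refine ⟨Function.update rr s a, cc, ?_, hcc, ?_, hcQ, ?_⟩
      · refine strictMono_update hrr s a ?_ ?_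
        · intro t htv
          have hxe : t = s1 := Fin.ext (by omega)
          rw [hxe]
          exact Fin.lt_def.2 (by omega)
        · intro t htv
          have h' := Fin.lt_def.1 (hrr (show s < t from Fin.lt_def.2 (by omega)))
          exact Fin.lt_def.2 (by omega)
      · intro t
        rcases eq_or_ne t s with rfl | ht
        · rw [Function.update_self]
          exact Fin.le_def.2 (by omega)
        · rw [Function.update_of_ne ht]; exact hrP t
      · intro t
        rcases eq_or_ne t s with rfl | ht
        · rw [Function.update_self, hs2]
          refine le_trans ha1 (shiftRight_ge N c ?_)
          rintro ⟨hco, -⟩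
          rw [hco] at ha3
          omega
        · rw [Function.update_of_ne ht]
          refine le_trans (hval t) (shiftRight_ge N c ?_)
          rintro ⟨-, hco⟩
          exact ht (Fin.rev_injective (hcc.injective (hco.trans hs2.symm)))
  · -- repair the column using the cell to the right
    have hvQ := Fin.le_def.1 (hcQ s.rev)
    refine ⟨rr, Function.update cc s.rev ⟨j, hj2⟩, hrr, ?_, hrP, ?_, ?_⟩
    · refine strictMono_update hcc s.rev _ ?_ ?_
      · intro t htv
        have h' := Fin.lt_def.1 (hcc (show t < s.rev from Fin.lt_def.2 (by omega)))
        rw [hs2] at h'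
        exact Fin.lt_def.2 (by simp; omega)
      · intro t htv
        have hrevval : (s.rev : ℕ) = K - (s : ℕ) := val_rev s
        have htrev : (t.rev : ℕ) = K - (t : ℕ) := val_rev t
        have htk := t.isLt
        have hne : (cc t : ℕ) ≠ j := by
          intro hx
          refine hb ⟨t.rev, by omega, ?_⟩
          rw [Fin.rev_rev]
          exact hx
        have h' := Fin.lt_def.1 (hcc (show s.rev < t from Fin.lt_def.2 (by omega)))
        rw [hs2] at h'
        exact Fin.lt_def.2 (by simp; omega)
    · intro t
      rcases eq_or_ne t s.rev with rfl | ht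
      · rw [Function.update_self]
        have h' := Fin.le_def.1 (hcQ s.rev)
        rw [hs2] at h'
        exact Fin.le_def.2 (by simp; omega)
      · rw [Function.update_of_ne ht]; exact hcQ t
    · intro t
      rcases eq_or_ne t s with rfl | ht
      · rw [Function.update_self, hs1]
        rw [shiftRight_target N c (by simp; omega)]
        omega
      · rw [Function.update_of_ne (fun hco => ht (Fin.rev_injective hco))]
        refine le_trans (hval t) (shiftRight_ge N c ?_)
        rintro ⟨-, hco⟩
        exact ht (Fin.rev_injective (hcc.injective (hco.trans hs2.symm)))

lemma carries_fCol {m n : ℕ} {w : Fin m → Option (Fin n)} {N N' : Matrix (Fin m) (Fin n) ℕ}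
    (hN : CarriesAntidiag w N) {j : ℕ} (hj1 : 1 ≤ j) (hj2 : j < n) (hdesc : j ∉ DescCol w)
    (h : fCol j N = some N') : CarriesAntidiag w N' := by
  obtain ⟨p, c, hp, hc, rfl⟩ := fCol_some h
  obtain ⟨P, Q, hess, rr, cc, hrr, hcc, hrP, hcQ, hval⟩ := hN
  have hQne : (Q : ℕ) + 1 ≠ j := fun hQj =>
    hdesc (descCol_of_essCell hess hj1 hj2 hQj)
  obtain ⟨rr', cc', h1, h2, h3, h4, h5⟩ :=
    carries_fCol_aux hj1 hj2 hp hc hQne rr cc hrr hcc hrP hcQ hval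
  exact ⟨P, Q, hess, rr', cc', h1, h2, h3, h4, h5⟩

/-- Carrying an antidiagonal (of a Fulton generator of the Schubert
determinantal ideal of `w`) is preserved by `e_i^row` (all `i`), by `f_i^row` for
`i ∉ Desc_row(w)`, by `e_j^col` (all `j`), and by `f_j^col` for `j ∉ Desc_col(w)`,
whenever the output is not `∅`. -/
theorem antidiagonal_preserved (m n : ℕ) (w : Fin m → Option (Fin n))
    (hw : IsPartialPerm w) (N : Matrix (Fin m) (Fin n) ℕ)
    (hN : CarriesAntidiag w N) :
    (∀ i, 1 ≤ i → i < m → ∀ N', eRow i N = some N' → CarriesAntidiag w N') ∧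
    (∀ i, 1 ≤ i → i < m → i ∉ DescRow w →
      ∀ N', fRow i N = some N' → CarriesAntidiag w N') ∧
    (∀ j, 1 ≤ j → j < n → ∀ N', eCol j N = some N' → CarriesAntidiag w N') ∧
    (∀ j, 1 ≤ j → j < n → j ∉ DescCol w →
      ∀ N', fCol j N = some N' → CarriesAntidiag w N') := by
  refine ⟨?_, ?_, ?_, ?_⟩
  · intro i hi1 _ N' hN'
    exact carries_eRow hN hi1 hN'
  · intro i hi1 hi2 hdesc N' hN'
    exact carries_fRow hN hi1 hi2 hdesc hN'
  · intro j hj1 _ N' hN'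
    exact carries_eCol hN hj1 hN'
  · intro j hj1 hj2 hdesc N' hN'
    exact carries_fCol hN hj1 hj2 hdesc hN'

end FilteredRSK
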